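/- arXiv:2508.02010 — 8 statements merged into one kernel-verified Lean document; each statement's English description precedes it below -/
import Mathlib

section
/- Let Γ be a bipartite graph with parts X and Y, where |X| = n and |Y| = α ≥ 2. Suppose each vertex in Y has on average w neighbors in X. Then there exist two distinct vertices y₁, y₂ ∈ Y having at least (w/n)(w - (n-w)/(α-1)) common neighbors. -/
open Finset

/-- In a bipartite graph with parts `X` (of size `n`) and `Y` (of size `α ≥ 2`),
if each vertex of `Y` has on average `w` neighbors (all lying in `X`), then some two distinct
vertices of `Y` have at least `(w/n)(w - (n-w)/(α-1))` common neighbors. -/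
theorem stmt0 {V : Type*} [Fintype V] [DecidableEq V] (G : SimpleGraph V) [DecidableRel G.Adj]
    (X Y : Finset V) (n α : ℕ) (w : ℚ)
    (hdisj : Disjoint X Y) (hcover : X ∪ Y = Finset.univ)
    (hbip : ∀ u v, G.Adj u v → (u ∈ X ∧ v ∈ Y) ∨ (u ∈ Y ∧ v ∈ X))
    (hX : X.card = n) (hY : Y.card = α) (hα : 2 ≤ α)
    (havg : (∑ y ∈ Y, (G.degree y : ℚ)) = (α : ℚ) * w) :
    ∃ y₁ ∈ Y, ∃ y₂ ∈ Y, y₁ ≠ y₂ ∧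
      ((G.neighborFinset y₁ ∩ G.neighborFinset y₂).card : ℚ) ≥
        (w / n) * (w - ((n : ℚ) - w) / ((α : ℚ) - 1)) := by
  classical
  set T : ℚ := (w / n) * (w - ((n : ℚ) - w) / ((α : ℚ) - 1)) with hT
  set e : V → ℕ := fun x => (Y.filter (fun y => G.Adj x y)).card with he
  have hα1 : (1:ℚ) ≤ (α:ℚ) - 1 := by
    have : (2:ℚ) ≤ (α:ℚ) := by exact_mod_cast hα
    linarith
  -- neighbors of a vertex of Y all lie in X
  have hNsub : ∀ y ∈ Y, G.neighborFinset y = X.filter (fun x => G.Adj x y) := by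
    intro y hy
    ext x
    simp only [SimpleGraph.mem_neighborFinset, mem_filter]
    constructor
    · intro h
      refine ⟨?_, h.symm⟩
      rcases hbip y x h with ⟨h1, _⟩ | ⟨_, h2⟩
      · exact absurd hy (Finset.disjoint_left.mp hdisj h1)
      · exact h2
    · exact fun h => h.2.symm
  -- sum of e over X equals α * w
  have hs : (∑ x ∈ X, (e x : ℚ)) = (α : ℚ) * w := by
    rw [← havg]
    have : ∀ y ∈ Y, (G.degree y : ℚ) = ∑ x ∈ X, (if G.Adj x y then (1:ℚ) else 0) := by
      intro y hy
      rw [← SimpleGraph.card_neighborFinset_eq_degree, hNsub y hy, Finset.card_filter]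
      push_cast
      rfl
    rw [Finset.sum_congr rfl this, Finset.sum_comm]
    refine Finset.sum_congr rfl fun x _ => ?_
    simp only [he, Finset.card_filter]
    push_cast
    rfl
  -- the common-neighbor count identity
  have hcn : ∀ p ∈ Y.offDiag,
      ((G.neighborFinset p.1 ∩ G.neighborFinset p.2).card : ℚ)
        = ∑ x ∈ X, (if G.Adj x p.1 ∧ G.Adj x p.2 then (1:ℚ) else 0) := by
    intro p hp
    obtain ⟨h1, h2, -⟩ := Finset.mem_offDiag.mp hp
    have : G.neighborFinset p.1 ∩ G.neighborFinset p.2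
        = X.filter (fun x => G.Adj x p.1 ∧ G.Adj x p.2) := by
      rw [hNsub p.1 h1, hNsub p.2 h2]
      ext x
      simp only [Finset.mem_inter, Finset.mem_filter]
      tauto
    rw [this, Finset.card_filter]
    push_cast
    rfl
  -- total common-neighbor count
  have hS : (∑ p ∈ Y.offDiag, ((G.neighborFinset p.1 ∩ G.neighborFinset p.2).card : ℚ))
      = ∑ x ∈ X, ((e x : ℚ)^2 - (e x : ℚ)) := by
    rw [Finset.sum_congr rfl hcn, Finset.sum_comm]
    refine Finset.sum_congr rfl fun x _ => ?_
    have hfilt : Y.offDiag.filter (fun p => G.Adj x p.1 ∧ G.Adj x p.2)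
        = (Y.filter (fun y => G.Adj x y)).offDiag := by
      ext p
      simp only [Finset.mem_filter, Finset.mem_offDiag]
      tauto
    rw [← Finset.sum_filter_add_sum_filter_not _ (fun p => G.Adj x p.1 ∧ G.Adj x p.2)]
    rw [Finset.sum_ite_of_true (by intro p hp; exact (Finset.mem_filter.mp hp).2),
        Finset.sum_ite_of_false (by intro p hp; exact (Finset.mem_filter.mp hp).2)]
    simp only [Finset.sum_const, Finset.sum_const_zero, add_zero, nsmul_eq_mul, mul_one]
    rw [hfilt, Finset.offDiag_card]
    have hle : e x ≤ e x * e x := by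
      rcases Nat.eq_zero_or_pos (e x) with h | h
      · simp [h]
      · exact Nat.le_mul_of_pos_left _ h
    rw [Nat.cast_sub hle]
    push_cast
    ring
  -- Cauchy–Schwarz
  have hCS : ((α : ℚ) * w)^2 ≤ (n : ℚ) * ∑ x ∈ X, (e x : ℚ)^2 := by
    rw [← hs, ← hX]
    exact sq_sum_le_card_mul_sum_sq
  -- nonnegativity of w
  have hw0 : 0 ≤ w := by
    have hs0 : (0:ℚ) ≤ ∑ x ∈ X, (e x : ℚ) := Finset.sum_nonneg fun x _ => by positivity
    rw [hs] at hs0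
    have hαpos : (0:ℚ) < α := by linarith
    nlinarith
  -- key averaging inequality
  have hcardoff : (Y.offDiag.card : ℚ) = (α : ℚ) * ((α : ℚ) - 1) := by
    rw [Finset.offDiag_card, hY, Nat.cast_sub (Nat.le_mul_of_pos_left _ (by omega))]
    push_cast
    ring
  have key : ∑ p ∈ Y.offDiag, T ≤
      ∑ p ∈ Y.offDiag, ((G.neighborFinset p.1 ∩ G.neighborFinset p.2).card : ℚ) := by
    rw [hS, Finset.sum_const, nsmul_eq_mul, hcardoff]
    have hsum : ∑ x ∈ X, ((e x : ℚ)^2 - (e x : ℚ))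
        = (∑ x ∈ X, (e x : ℚ)^2) - (α : ℚ) * w := by
      rw [Finset.sum_sub_distrib, hs]
    rw [hsum]
    rcases eq_or_lt_of_le hw0 with hw | hw
    · -- w = 0 : T = 0 and the RHS is nonnegative
      have hT0 : T = 0 := by rw [hT, ← hw]; ring
      rw [hT0, mul_zero]
      have : (α:ℚ) * w = 0 := by rw [← hw]; ring
      rw [this, sub_zero]
      exact Finset.sum_nonneg fun x _ => by positivity
    · -- w > 0 : then n > 0 and we can clear denominators
      have hn : (0:ℚ) < n := by
        rcases Nat.eq_zero_or_pos n with h | h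
        · exfalso
          have hXe : X = ∅ := Finset.card_eq_zero.mp (by omega)
          have : (∑ x ∈ X, (e x : ℚ)) = 0 := by simp [hXe]
          rw [hs] at this
          have hαpos : (0:ℚ) < α := by linarith
          nlinarith
        · exact_mod_cast h
      have hα1' : (α:ℚ) - 1 ≠ 0 := by linarith
      rw [hT]
      have expand : (α : ℚ) * ((α:ℚ) - 1) * ((w / n) * (w - ((n : ℚ) - w) / ((α : ℚ) - 1)))
          = ((α:ℚ) * w)^2 / n - (α:ℚ) * w := by
        field_simp
        ring
      rw [expand]
      have : ((α:ℚ) * w)^2 / n ≤ ∑ x ∈ X, (e x : ℚ)^2 := by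
        rw [div_le_iff₀ hn]
        linarith [hCS]
      linarith
  obtain ⟨p, hp, hle⟩ := Finset.exists_le_of_sum_le
    (by
      have : Y.Nontrivial := Finset.one_lt_card.mp (by omega)
      obtain ⟨a, ha, b, hb, hab⟩ := this
      exact ⟨(a, b), Finset.mem_offDiag.mpr ⟨ha, hb, hab⟩⟩) key
  obtain ⟨h1, h2, h3⟩ := Finset.mem_offDiag.mp hp
  exact ⟨p.1, h1, p.2, h2, h3, hle⟩
end

section
/- Let Γ be a connected amply regular graph with diameter d ≥ 4 and parameters (v, k, λ, μ) where k ≥ 5 is odd and μ = (k-1)/2. Then λ = 0. -/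
open SimpleGraph

/-- From a vertex at distance `n+1`, one can take one step along a geodesic. -/
private lemma stmt3_step {V : Type*} {G : SimpleGraph V} (hconn : G.Connected) {u v : V} {n : ℕ}
    (h : G.dist u v = n + 1) : ∃ w, G.Adj u w ∧ G.dist w v = n := by
  obtain ⟨p, hp⟩ := (hconn u v).exists_walk_length_eq_dist
  cases p with
  | nil => rw [h] at hp; simp at hp
  | @cons _ b _ hadj q =>
    refine ⟨b, hadj, ?_⟩
    have h1 : G.dist b v ≤ n := by
      have := SimpleGraph.dist_le q
      simp only [SimpleGraph.Walk.length_cons, h] at hp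
      omega
    have h2 : G.dist u b ≤ 1 := (dist_eq_one_iff_adj.mpr hadj).le
    have h3 : G.dist u v ≤ G.dist u b + G.dist b v := hconn.dist_triangle
    omega

/-- A connected amply regular graph with diameter `≥ 4` and parameters
`(v, k, λ, μ)` with `k ≥ 5` odd and `μ = (k-1)/2` satisfies `λ = 0`. -/
theorem stmt3 {V : Type*} [Fintype V] (G : SimpleGraph V) (k lam mu : ℕ)
    (hconn : G.Connected) (hk : 5 ≤ k) (hkodd : Odd k) (hmu : mu = (k - 1) / 2)
    (hreg : ∀ v, (G.neighborSet v).ncard = k)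
    (hlam : ∀ u v, G.Adj u v → (G.neighborSet u ∩ G.neighborSet v).ncard = lam)
    (hmu2 : ∀ u v, G.dist u v = 2 → (G.neighborSet u ∩ G.neighborSet v).ncard = mu)
    (hdiam : ∃ u v, 4 ≤ G.dist u v) :
    lam = 0 := by
  classical
  -- arithmetic preliminaries
  obtain ⟨j, hj⟩ := hkodd
  have hk2 : k = 2 * mu + 1 := by omega
  have hmu2' : 2 ≤ mu := by omega
  -- adjacency gives distance ≤ 1
  have adj_dist : ∀ {a b : V}, G.Adj a b → G.dist a b ≤ 1 := fun h =>
    (dist_eq_one_iff_adj.mpr h).le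
  -- extract a geodesic of length 4
  obtain ⟨u, v, huv⟩ := hdiam
  set n := G.dist u v with hn
  have h0 : G.dist u v = (n - 1) + 1 := by omega
  obtain ⟨u1, a01, d1⟩ := stmt3_step hconn h0
  have h1 : G.dist u1 v = (n - 2) + 1 := by omega
  obtain ⟨u2, a12, d2⟩ := stmt3_step hconn h1
  have h2 : G.dist u2 v = (n - 3) + 1 := by omega
  obtain ⟨u3, a23, d3⟩ := stmt3_step hconn h2
  have h3 : G.dist u3 v = (n - 4) + 1 := by omega
  obtain ⟨u4, a34, d4⟩ := stmt3_step hconn h3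
  set u0 := u with hu0
  -- distances along the geodesic
  have d04 : 4 ≤ G.dist u0 u4 := by
    have := hconn.dist_triangle (u := u0) (v := u4) (w := v)
    omega
  have d02 : G.dist u0 u2 = 2 := by
    have hle : G.dist u0 u2 ≤ 2 := by
      have t1 := hconn.dist_triangle (u := u0) (v := u1) (w := u2)
      have := adj_dist a01; have := adj_dist a12
      omega
    have hge : 2 ≤ G.dist u0 u2 := by
      have := hconn.dist_triangle (u := u0) (v := u2) (w := v)
      omega
    omega
  have d24 : G.dist u2 u4 = 2 := by
    have hle : G.dist u2 u4 ≤ 2 := by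
      have t1 := hconn.dist_triangle (u := u2) (v := u3) (w := u4)
      have := adj_dist a23; have := adj_dist a34
      omega
    have hge : 2 ≤ G.dist u2 u4 := by
      have := hconn.dist_triangle (u := u2) (v := u4) (w := v)
      omega
    omega
  -- the two "halves" of the neighborhood of u2
  set A : Set V := G.neighborSet u0 ∩ G.neighborSet u2 with hA
  set B : Set V := G.neighborSet u4 ∩ G.neighborSet u2 with hB
  have hAcard : A.ncard = mu := hmu2 u0 u2 d02
  have hBcard : B.ncard = mu := hmu2 u4 u2 (by rwa [SimpleGraph.dist_comm])
  have hABdisj : Disjoint A B := by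
    rw [Set.disjoint_left]
    rintro z ⟨hz0, hz2⟩ ⟨hz4, hz2'⟩
    have : G.dist u0 u4 ≤ G.dist u0 z + G.dist z u4 := hconn.dist_triangle
    have h1 := adj_dist hz0
    have h2 := adj_dist (G.adj_symm hz4)
    omega
  have hABsub : A ∪ B ⊆ G.neighborSet u2 := by
    rintro z (⟨_, hz⟩ | ⟨_, hz⟩) <;> exact hz
  have hN2card : (G.neighborSet u2).ncard = k := hreg u2
  have hABcard : (A ∪ B).ncard = 2 * mu := by
    rw [Set.ncard_union_eq hABdisj, hAcard, hBcard]; ring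
  -- the extra vertex x
  have hxcard : (G.neighborSet u2 \ (A ∪ B)).ncard = 1 := by
    rw [Set.ncard_diff hABsub, hN2card, hABcard]; omega
  obtain ⟨x, hxeq⟩ := Set.ncard_eq_one.mp hxcard
  have hxmem : x ∈ G.neighborSet u2 := by
    have : x ∈ G.neighborSet u2 \ (A ∪ B) := hxeq ▸ rfl
    exact this.1
  have hxAB : x ∉ A ∪ B := by
    have : x ∈ G.neighborSet u2 \ (A ∪ B) := hxeq ▸ rfl
    exact this.2
  have hxA : x ∉ A := fun h => hxAB (Or.inl h)
  have hxB : x ∉ B := fun h => hxAB (Or.inr h)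
  have hN2dec : ∀ z ∈ G.neighborSet u2, z ∈ A ∪ B ∪ {x} := by
    intro z hz
    by_cases h : z ∈ A ∪ B
    · exact Or.inl h
    · right
      have : z ∈ G.neighborSet u2 \ (A ∪ B) := ⟨hz, h⟩
      rw [hxeq] at this; exact this
  -- common neighborhoods of a ∈ A and u2 lie in (A ∪ {x}) \ {a}
  have sub_a : ∀ a ∈ A, G.neighborSet a ∩ G.neighborSet u2 ⊆ (A ∪ {x}) \ {a} := by
    rintro a ⟨ha0, _⟩ z ⟨hza, hz2⟩
    have hzB : z ∉ B := by
      rintro ⟨hz4, _⟩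
      have t1 : G.dist u0 u4 ≤ G.dist u0 a + G.dist a u4 := hconn.dist_triangle
      have t2 : G.dist a u4 ≤ G.dist a z + G.dist z u4 := hconn.dist_triangle
      have e1 := adj_dist ha0
      have e2 := adj_dist hza
      have e3 := adj_dist (G.adj_symm hz4)
      omega
    refine ⟨?_, ?_⟩
    · rcases hN2dec z hz2 with (hz | hz) | hz
      · exact Or.inl hz
      · exact absurd hz hzB
      · exact Or.inr hz
    · simp only [Set.mem_singleton_iff]
      exact fun h => G.irrefl (h ▸ hza)
  -- symmetric statement for b ∈ B
  have sub_b : ∀ b ∈ B, G.neighborSet b ∩ G.neighborSet u2 ⊆ (B ∪ {x}) \ {b} := by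
    rintro b ⟨hb4, _⟩ z ⟨hzb, hz2⟩
    have hzA : z ∉ A := by
      rintro ⟨hz0, _⟩
      have t1 : G.dist u0 u4 ≤ G.dist u0 z + G.dist z u4 := hconn.dist_triangle
      have t2 : G.dist z u4 ≤ G.dist z b + G.dist b u4 := hconn.dist_triangle
      have e1 := adj_dist hz0
      have e2 := adj_dist (G.adj_symm hzb)
      have e3 := adj_dist (G.adj_symm hb4)
      omega
    refine ⟨?_, ?_⟩
    · rcases hN2dec z hz2 with (hz | hz) | hz
      · exact absurd hz hzA
      · exact Or.inl hz
      · exact Or.inr hz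
    · simp only [Set.mem_singleton_iff]
      intro h
      exact G.irrefl (h ▸ hzb)
  -- cardinality of (A ∪ {x}) \ {a} for a ∈ A
  have card_a : ∀ a ∈ A, ((A ∪ {x}) \ {a}).ncard = mu := by
    intro a ha
    have hu : (A ∪ {x}).ncard = mu + 1 := by
      rw [Set.union_singleton, Set.ncard_insert_of_notMem hxA, hAcard]
    rw [Set.ncard_diff_singleton_of_mem (show a ∈ A ∪ {x} from Or.inl ha), hu]; omega
  have card_b : ∀ b ∈ B, ((B ∪ {x}) \ {b}).ncard = mu := by
    intro b hb
    have hu : (B ∪ {x}).ncard = mu + 1 := by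
      rw [Set.union_singleton, Set.ncard_insert_of_notMem hxB, hBcard]
    rw [Set.ncard_diff_singleton_of_mem (show b ∈ B ∪ {x} from Or.inl hb), hu]; omega
  -- u1 ∈ A, hence λ ≤ μ
  have hu1A : u1 ∈ A := ⟨a01, G.adj_symm a12⟩
  have hlam_le : lam ≤ mu := by
    have h1 : (G.neighborSet u1 ∩ G.neighborSet u2).ncard = lam := hlam u1 u2 a12
    have h2 := Set.ncard_le_ncard (sub_a u1 hu1A)
    rw [h1, card_a u1 hu1A] at h2
    exact h2
  -- Double counting: μ * |Γ₂(u0)| + k * (λ + 1) = k * k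
  let T2 : Finset V := Finset.univ.filter (fun z => G.dist u0 z = 2)
  let N1 : Finset V := G.neighborFinset u0
  have hN1card : N1.card = k := by
    have := hreg u0
    rwa [Set.ncard_eq_toFinset_card'] at this
  -- for each neighbor y of u0, count its neighbors at distance 2 from u0
  have per_y : ∀ y ∈ N1, (T2.filter (fun z => G.Adj y z)).card + (lam + 1) = k := by
    intro y hy
    rw [SimpleGraph.mem_neighborFinset] at hy
    set Ny : Finset V := G.neighborFinset y with hNy
    have hNycard : Ny.card = k := by
      have := hreg y
      rwa [Set.ncard_eq_toFinset_card'] at this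
    have hdist_le : ∀ z ∈ Ny, G.dist u0 z ≤ 2 := by
      intro z hz
      rw [SimpleGraph.mem_neighborFinset] at hz
      have := hconn.dist_triangle (u := u0) (v := y) (w := z)
      have := adj_dist hy
      have := adj_dist hz
      omega
    -- split Ny by distance from u0
    have split1 := Finset.card_filter_add_card_filter_not
      (s := Ny) (p := fun z => G.dist u0 z = 0)
    have split2 := Finset.card_filter_add_card_filter_not
      (s := Ny.filter (fun z => ¬ G.dist u0 z = 0)) (p := fun z => G.dist u0 z = 1)
    rw [Finset.filter_filter, Finset.filter_filter] at split2
    -- identify the three pieces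
    have p0 : (Ny.filter (fun z => G.dist u0 z = 0)).card = 1 := by
      have : Ny.filter (fun z => G.dist u0 z = 0) = {u0} := by
        ext z
        simp only [Finset.mem_filter, Finset.mem_singleton, SimpleGraph.mem_neighborFinset, hNy]
        constructor
        · rintro ⟨_, hz⟩
          exact (hconn.dist_eq_zero_iff.mp hz).symm
        · rintro rfl
          exact ⟨G.adj_symm hy, hconn.dist_eq_zero_iff.mpr rfl⟩
      rw [this, Finset.card_singleton]
    have p1 : (Ny.filter (fun z => ¬ G.dist u0 z = 0 ∧ G.dist u0 z = 1)).card = lam := by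
      have heq : Ny.filter (fun z => ¬ G.dist u0 z = 0 ∧ G.dist u0 z = 1)
          = (G.neighborSet y ∩ G.neighborSet u0).toFinset := by
        ext z
        simp only [Finset.mem_filter, SimpleGraph.mem_neighborFinset, hNy,
          Set.mem_toFinset, Set.mem_inter_iff, SimpleGraph.mem_neighborSet]
        constructor
        · rintro ⟨hz, _, hd1⟩
          exact ⟨hz, dist_eq_one_iff_adj.mp hd1⟩
        · rintro ⟨hz, hz0⟩
          exact ⟨hz, by simp [dist_eq_one_iff_adj.mpr hz0], dist_eq_one_iff_adj.mpr hz0⟩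
      rw [heq, ← Set.ncard_eq_toFinset_card']
      exact hlam y u0 (G.adj_symm hy)
    have p2 : Ny.filter (fun z => ¬ G.dist u0 z = 0 ∧ ¬ G.dist u0 z = 1)
        = T2.filter (fun z => G.Adj y z) := by
      ext z
      simp only [Finset.mem_filter, SimpleGraph.mem_neighborFinset, hNy, Finset.mem_univ,
        true_and, T2]
      constructor
      · rintro ⟨hz, h0, h1⟩
        have := hdist_le z (by rwa [SimpleGraph.mem_neighborFinset])
        exact ⟨by omega, hz⟩
      · rintro ⟨hd, hz⟩
        exact ⟨hz, by omega, by omega⟩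
    rw [p2] at split2
    rw [p0] at split1
    rw [p1] at split2
    omega
  -- for each z at distance 2 from u0, count its neighbors among N(u0)
  have per_z : ∀ z ∈ T2, (N1.filter (fun y => G.Adj y z)).card = mu := by
    intro z hz
    have hdz : G.dist u0 z = 2 := by
      simpa [T2] using hz
    have heq : N1.filter (fun y => G.Adj y z)
        = (G.neighborSet u0 ∩ G.neighborSet z).toFinset := by
      ext y
      simp only [Finset.mem_filter, SimpleGraph.mem_neighborFinset, N1,
        Set.mem_toFinset, Set.mem_inter_iff, SimpleGraph.mem_neighborSet]
      exact ⟨fun ⟨h1, h2⟩ => ⟨h1, G.adj_symm h2⟩, fun ⟨h1, h2⟩ => ⟨h1, G.adj_symm h2⟩⟩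
    rw [heq, ← Set.ncard_eq_toFinset_card']
    exact hmu2 u0 z hdz
  -- double count
  have hsum1 : ∑ y ∈ N1, (T2.filter (fun z => G.Adj y z)).card
      = ∑ z ∈ T2, (N1.filter (fun y => G.Adj y z)).card := by
    simp only [Finset.card_filter]
    rw [Finset.sum_comm]
  have hsum_left : ∑ y ∈ N1, (T2.filter (fun z => G.Adj y z)).card + k * (lam + 1) = k * k := by
    have : ∑ y ∈ N1, ((T2.filter (fun z => G.Adj y z)).card + (lam + 1)) = ∑ y ∈ N1, k :=
      Finset.sum_congr rfl per_y
    rw [Finset.sum_add_distrib, Finset.sum_const, Finset.sum_const, hN1card,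
      smul_eq_mul, smul_eq_mul] at this
    linarith
  have hsum_right : ∑ z ∈ T2, (N1.filter (fun y => G.Adj y z)).card = mu * T2.card := by
    rw [Finset.sum_congr rfl per_z, Finset.sum_const, smul_eq_mul, mul_comm]
  have hmain : mu * T2.card + k * (lam + 1) = k * k := by
    rw [← hsum_right, ← hsum1]; exact hsum_left
  -- divisibility: μ ∣ λ
  have hdvd : mu ∣ lam := by
    set n2 : ℕ := T2.card
    have hZ : (lam : ℤ) = (mu : ℤ) * (4 * mu + 2 - n2 - 2 * lam) := by
      have h1 : (mu : ℤ) * n2 + (2 * mu + 1) * (lam + 1) = (2 * mu + 1) * (2 * mu + 1) := by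
        have := hmain
        rw [hk2] at this
        exact_mod_cast this
      linear_combination h1
    have : (mu : ℤ) ∣ (lam : ℤ) := ⟨_, hZ⟩
    exact_mod_cast this
  -- hence λ = 0 or λ = μ
  have hcases : lam = 0 ∨ lam = mu := by
    obtain ⟨c, hc⟩ := hdvd
    rcases Nat.eq_zero_or_pos c with rfl | hcpos
    · left; omega
    · right
      have : mu ≤ lam := by
        calc mu = mu * 1 := (mul_one mu).symm
        _ ≤ mu * c := Nat.mul_le_mul_left mu hcpos
        _ = lam := hc.symm
      omega
  -- rule out λ = μ
  rcases hcases with h | hlm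
  · exact h
  · exfalso
    -- with λ = μ the inclusions become equalities, so x is adjacent to all of A and B
    have adj_xa : ∀ a ∈ A, G.Adj a x := by
      intro a ha
      have h1 : (G.neighborSet a ∩ G.neighborSet u2).ncard = mu := by
        rw [hlam a u2 ((ha.2 : G.Adj u2 a).symm), hlm]
      have heq : G.neighborSet a ∩ G.neighborSet u2 = (A ∪ {x}) \ {a} :=
        Set.eq_of_subset_of_ncard_le (sub_a a ha) (by rw [h1, card_a a ha])
      have hx_in : x ∈ G.neighborSet a ∩ G.neighborSet u2 := by
        rw [heq]
        refine ⟨Or.inr rfl, ?_⟩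
        simp only [Set.mem_singleton_iff]
        rintro rfl
        exact hxA ha
      exact hx_in.1
    have adj_xb : ∀ b ∈ B, G.Adj b x := by
      intro b hb
      have h1 : (G.neighborSet b ∩ G.neighborSet u2).ncard = mu := by
        rw [hlam b u2 ((hb.2 : G.Adj u2 b).symm), hlm]
      have heq : G.neighborSet b ∩ G.neighborSet u2 = (B ∪ {x}) \ {b} :=
        Set.eq_of_subset_of_ncard_le (sub_b b hb) (by rw [h1, card_b b hb])
      have hx_in : x ∈ G.neighborSet b ∩ G.neighborSet u2 := by
        rw [heq]
        refine ⟨Or.inr rfl, ?_⟩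
        simp only [Set.mem_singleton_iff]
        rintro rfl
        exact hxB hb
      exact hx_in.1
    -- so A ∪ B ⊆ N(x) ∩ N(u2), giving 2μ ≤ μ
    have hsub : A ∪ B ⊆ G.neighborSet x ∩ G.neighborSet u2 := by
      rintro z (hz | hz)
      · exact ⟨G.adj_symm (adj_xa z hz), hz.2⟩
      · exact ⟨G.adj_symm (adj_xb z hz), hz.2⟩
    have hxu2 : G.Adj x u2 := G.adj_symm hxmem
    have hcard : (G.neighborSet x ∩ G.neighborSet u2).ncard = mu := by
      rw [hlam x u2 hxu2, hlm]
    have h2mu : 2 * mu ≤ mu := by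
      have := Set.ncard_le_ncard hsub
      rw [hABcard, hcard] at this
      exact this
    omega
end

section
/- Let Γ be a connected amply regular graph with diameter d ≥ 4 and parameters (v, k, 0, μ) where k ≥ 5 is odd and μ = (k-1)/2. Then d ≤ 5. -/
open SimpleGraph Set

/-- If `dist u z = n+1`, there is a neighbor `w` of `z` with `dist u w = n`. -/
private lemma stmt4_peel {V : Type*} {G : SimpleGraph V} (hconn : G.Connected) {u z : V} {n : ℕ}
    (h : G.dist u z = n + 1) : ∃ w, G.Adj w z ∧ G.dist u w = n := by
  obtain ⟨p, hp⟩ := (hconn z u).exists_walk_length_eq_dist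
  rw [SimpleGraph.dist_comm, h] at hp
  cases p with
  | nil => simp at hp
  | @cons _ w _ hadj q =>
    have hlen : q.length = n := by simpa using hp
    refine ⟨w, hadj.symm, ?_⟩
    have h1 : G.dist u w ≤ n := by
      have := SimpleGraph.dist_le q.reverse
      simpa [hlen] using this
    have h2 : n ≤ G.dist u w := by
      have ht := hconn.dist_triangle (u := u) (v := w) (w := z)
      have hwz : G.dist w z ≤ 1 := by
        have := SimpleGraph.dist_le hadj.symm.toWalk
        simpa using this
      omega
    omega

/-- A connected amply regular graph with diameter `≥ 4` and parameters
`(v, k, 0, μ)` with `k ≥ 5` odd and `μ = (k-1)/2` has diameter at most `5`. -/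
theorem stmt4 {V : Type*} [Fintype V] (G : SimpleGraph V) (k mu : ℕ)
    (hconn : G.Connected) (hk : 5 ≤ k) (hkodd : Odd k) (hmu : mu = (k - 1) / 2)
    (hreg : ∀ v, (G.neighborSet v).ncard = k)
    (hlam : ∀ u v, G.Adj u v → (G.neighborSet u ∩ G.neighborSet v).ncard = 0)
    (hmu2 : ∀ u v, G.dist u v = 2 → (G.neighborSet u ∩ G.neighborSet v).ncard = mu)
    (hdiam : ∃ u v, 4 ≤ G.dist u v) :
    ∀ u v, G.dist u v ≤ 5 := by
  classical
  obtain ⟨t, ht⟩ := hkodd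
  have hk2 : k = 2 * mu + 1 := by omega
  have hmu2le : 2 ≤ mu := by omega
  -- triangle-free
  have trifree : ∀ a b c, G.Adj a b → G.Adj a c → G.Adj b c → False := by
    intro a b c hab hac hbc
    have h0 := hlam a b hab
    rw [Set.ncard_eq_zero (Set.toFinite _)] at h0
    have hc : c ∈ G.neighborSet a ∩ G.neighborSet b := ⟨hac, hbc⟩
    rw [h0] at hc
    exact hc
  have adj_dist_le_one : ∀ a b : V, G.Adj a b → G.dist a b ≤ 1 := by
    intro a b hadj
    have := SimpleGraph.dist_le hadj.toWalk
    simpa using this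
  -- distance exactly two
  have dist2 : ∀ a b c : V, G.Adj a b → G.Adj b c → ¬ G.Adj a c → a ≠ c → G.dist a c = 2 := by
    intro a b c hab hbc hnac hne
    have hle : G.dist a c ≤ 2 := by
      have h1 := hconn.dist_triangle (u := a) (v := b) (w := c)
      have h2 := adj_dist_le_one a b hab
      have h3 := adj_dist_le_one b c hbc
      omega
    have h0 : G.dist a c ≠ 0 := fun h => hne (hconn.dist_eq_zero_iff.mp h)
    have h1 : G.dist a c ≠ 1 := fun h => hnac (SimpleGraph.dist_eq_one_iff_adj.mp h)
    omega
  -- Key lemma: a vertex at distance 3 from u has at least mu+1 neighbors at distance 2 from u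
  have key : ∀ u z : V, G.dist u z = 3 →
      mu + 1 ≤ (G.neighborSet z ∩ {w | G.dist u w = 2}).ncard := by
    intro u z h3
    obtain ⟨w0, hw0z, hw0d⟩ := stmt4_peel hconn (show G.dist u z = 2 + 1 from h3)
    set S : Set V := G.neighborSet z ∩ {w | G.dist u w = 2} with hSdef
    set M : Set V := G.neighborSet u ∩ G.neighborSet w0 with hMdef
    have hM : M.ncard = mu := hmu2 u w0 hw0d
    have hxfacts : ∀ x ∈ M, G.dist x z = 2 ∧ (G.neighborSet x ∩ G.neighborSet z) ⊆ S := by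
      intro x hx
      have hux : G.Adj u x := hx.1
      have hw0x : G.Adj w0 x := hx.2
      have hdux : G.dist u x ≤ 1 := adj_dist_le_one u x hux
      have hnxz : ¬ G.Adj x z := by
        intro hxz
        have h1 := hconn.dist_triangle (u := u) (v := x) (w := z)
        have h2 := adj_dist_le_one x z hxz
        omega
      have hxnez : x ≠ z := by
        intro hxz
        rw [hxz] at hdux
        omega
      have hdxz : G.dist x z = 2 := dist2 x w0 z hw0x.symm hw0z hnxz hxnez
      refine ⟨hdxz, ?_⟩
      intro s hs
      have hxs : G.Adj x s := hs.1
      have hzs : G.Adj z s := hs.2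
      refine ⟨hzs, ?_⟩
      have hle : G.dist u s ≤ 2 := by
        have h1 := hconn.dist_triangle (u := u) (v := x) (w := s)
        have h2 := adj_dist_le_one x s hxs
        omega
      have hge : 2 ≤ G.dist u s := by
        have h1 := hconn.dist_triangle (u := u) (v := s) (w := z)
        have h2 := adj_dist_le_one s z hzs.symm
        omega
      show G.dist u s = 2
      omega
    by_contra hcon
    push_neg at hcon
    have hScard : S.ncard ≤ mu := by omega
    have hSeq : ∀ x ∈ M, S = G.neighborSet x ∩ G.neighborSet z := by
      intro x hx
      have h1 := (hxfacts x hx).2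
      have h2 := hmu2 x z (hxfacts x hx).1
      exact (Set.eq_of_subset_of_ncard_le h1 (by omega) (Set.toFinite _)).symm
    have hMne : M.Nonempty := Set.nonempty_of_ncard_ne_zero (by omega)
    obtain ⟨x0, hx0⟩ := hMne
    have hSn : S.ncard = mu := by
      rw [hSeq x0 hx0]
      exact hmu2 x0 z (hxfacts x0 hx0).1
    obtain ⟨w1, hw1, w2, hw2, hne⟩ := (Set.one_lt_ncard (Set.toFinite _)).mp
      (by omega : 1 < S.ncard)
    have hz1 : G.Adj z w1 := hw1.1
    have hz2 : G.Adj z w2 := hw2.1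
    have hnadj : ¬ G.Adj w1 w2 := fun h => trifree z w1 w2 hz1 hz2 h
    have hd12 : G.dist w1 w2 = 2 := dist2 w1 z w2 hz1.symm hz2 hnadj hne
    have hcc := hmu2 w1 w2 hd12
    have hzM : z ∉ M := by
      intro hzM
      have := adj_dist_le_one u z hzM.1
      omega
    have hsub : insert z M ⊆ G.neighborSet w1 ∩ G.neighborSet w2 := by
      intro a ha
      rcases ha with rfl | haM
      · exact ⟨hz1.symm, hz2.symm⟩
      · have h1 : w1 ∈ G.neighborSet a ∩ G.neighborSet z := by
          rw [← hSeq a haM]; exact hw1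
        have h2 : w2 ∈ G.neighborSet a ∩ G.neighborSet z := by
          rw [← hSeq a haM]; exact hw2
        exact ⟨h1.1.symm, h2.1.symm⟩
    have hfinal : mu + 1 ≤ mu := by
      calc mu + 1 = (insert z M).ncard := by
            rw [Set.ncard_insert_of_notMem hzM (Set.toFinite _), hM]
        _ ≤ (G.neighborSet w1 ∩ G.neighborSet w2).ncard :=
            Set.ncard_le_ncard hsub (Set.toFinite _)
        _ = mu := hcc
    omega
  -- main argument
  intro u v
  by_contra hbig
  push_neg at hbig
  have h6le : 6 ≤ G.dist u v := hbig
  -- descend to a vertex at distance exactly 6 from u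
  have descend : ∀ d : ℕ, ∀ w : V, G.dist u w = 6 + d → ∃ v', G.dist u v' = 6 := by
    intro d
    induction d with
    | zero => exact fun w h => ⟨w, h⟩
    | succ d ih =>
      intro w h
      obtain ⟨w', _, hw'⟩ := stmt4_peel hconn (show G.dist u w = (6 + d) + 1 by omega)
      exact ih w' hw'
  obtain ⟨v', hv6⟩ := descend (G.dist u v - 6) v (by omega)
  obtain ⟨w5, ha5, hd5⟩ := stmt4_peel hconn (show G.dist u v' = 5 + 1 from hv6)
  obtain ⟨w4, ha4, hd4⟩ := stmt4_peel hconn (show G.dist u w5 = 4 + 1 from hd5)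
  obtain ⟨m, ha3, hd3⟩ := stmt4_peel hconn (show G.dist u w4 = 3 + 1 from hd4)
  have hmv : G.dist m v' = 3 := by
    have h1 : G.dist m v' ≤ 3 := by
      have t1 := hconn.dist_triangle (u := m) (v := w4) (w := v')
      have t2 := hconn.dist_triangle (u := w4) (v := w5) (w := v')
      have e1 := adj_dist_le_one m w4 ha3
      have e2 := adj_dist_le_one w4 w5 ha4
      have e3 := adj_dist_le_one w5 v' ha5
      omega
    have h2 := hconn.dist_triangle (u := u) (v := m) (w := v')
    omega
  have k1 := key u m hd3
  have k2 := key v' m (by rw [SimpleGraph.dist_comm]; exact hmv)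
  set A : Set V := G.neighborSet m ∩ {w | G.dist u w = 2} with hAdef
  set B : Set V := G.neighborSet m ∩ {w | G.dist v' w = 2} with hBdef
  have hdisj : Disjoint A B := by
    rw [Set.disjoint_left]
    intro a haA haB
    have hau : G.dist u a = 2 := haA.2
    have hav : G.dist v' a = 2 := haB.2
    have t1 := hconn.dist_triangle (u := u) (v := a) (w := v')
    have t2 : G.dist a v' = 2 := by rw [SimpleGraph.dist_comm]; exact hav
    omega
  have hsub : A ∪ B ⊆ G.neighborSet m :=
    Set.union_subset Set.inter_subset_left Set.inter_subset_left
  have hle : (A ∪ B).ncard ≤ k := by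
    rw [← hreg m]
    exact Set.ncard_le_ncard hsub (Set.toFinite _)
  rw [Set.ncard_union_eq hdisj (Set.toFinite _) (Set.toFinite _)] at hle
  omega
end

section
/- Let Γ be a connected (G,2)-distance-transitive graph of valency k ≥ 2 with intersection numbers b₁ and c₂. If gcd(b₁, k) = 1 and c₂ divides k, then Γ is (G,2)-geodesic-transitive. -/
/-- Let `Γ` be a connected `(G,2)`-distance-transitive graph of valency
`k ≥ 2` with intersection numbers `b₁`, `c₂`. If `gcd(b₁, k) = 1` and `c₂ ∣ k`, then `Γ` is
`(G,2)`-geodesic-transitive, i.e. `G` is transitive on arcs and on 2-geodesics. -/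
theorem stmt8 {V : Type*} [Fintype V] (Γ : SimpleGraph V) (G : Type*) [Group G]
    (φ : G →* Equiv.Perm V)
    (haut : ∀ (g : G) (u v : V), Γ.Adj (φ g u) (φ g v) ↔ Γ.Adj u v)
    (k b₁ c₂ : ℕ) (hk : 2 ≤ k) (hconn : Γ.Connected)
    (hreg : ∀ v, (Γ.neighborSet v).ncard = k)
    (hb₁ : ∀ u v, Γ.Adj u v → {w | Γ.Adj v w ∧ Γ.dist u w = 2}.ncard = b₁)
    (hc₂ : ∀ u w, Γ.dist u w = 2 → (Γ.neighborSet u ∩ Γ.neighborSet w).ncard = c₂)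
    (hvt : ∀ u v : V, ∃ g : G, φ g u = v)
    (hs1 : ∀ u v w : V, Γ.Adj u v → Γ.Adj u w → ∃ g : G, φ g u = u ∧ φ g v = w)
    (hs2 : ∀ u v w : V, Γ.dist u v = 2 → Γ.dist u w = 2 → ∃ g : G, φ g u = u ∧ φ g v = w)
    (hcop : Nat.gcd b₁ k = 1) (hdvd : c₂ ∣ k) :
    (∀ u v u' v' : V, Γ.Adj u v → Γ.Adj u' v' → ∃ g : G, φ g u = u' ∧ φ g v = v') ∧
    (∀ u v w u' v' w' : V, Γ.Adj u v → Γ.Adj v w → Γ.dist u w = 2 →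
      Γ.Adj u' v' → Γ.Adj v' w' → Γ.dist u' w' = 2 →
      ∃ g : G, φ g u = u' ∧ φ g v = v' ∧ φ g w = w') := by
  classical
  -- every `φ g` is a graph isomorphism, hence preserves distance
  have hmono : ∀ (g : G) (a b : V), Γ.dist (φ g a) (φ g b) ≤ Γ.dist a b := by
    intro g a b
    obtain ⟨p, hp⟩ := hconn.exists_walk_length_eq_dist a b
    let e : Γ ≃g Γ := { toEquiv := φ g, map_rel_iff' := haut g _ _ }
    have := Γ.dist_le (p.map e.toHom)
    rwa [SimpleGraph.Walk.length_map, hp] at this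
  have hdist : ∀ (g : G) (a b : V), Γ.dist (φ g a) (φ g b) = Γ.dist a b := by
    intro g a b
    refine le_antisymm (hmono g a b) ?_
    have := hmono g⁻¹ (φ g a) (φ g b)
    simpa [map_inv] using this
  have hinj : ∀ g : G, Function.Injective (φ g) := fun g => (φ g).injective
  -- key lemma: stabilizer of u is transitive on 2-geodesics starting at u
  have key : ∀ u v w v' w' : V, Γ.Adj u v → Γ.Adj v w → Γ.dist u w = 2 →
      Γ.Adj u v' → Γ.Adj v' w' → Γ.dist u w' = 2 →
      ∃ g : G, φ g u = u ∧ φ g v = v' ∧ φ g w = w' := by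
    intro u v w v' w' huv hvw hdw huv' hvw' hdw'
    set N : Finset V := Finset.univ.filter (fun x => Γ.Adj u x) with hNdef
    set D : Finset V := Finset.univ.filter (fun x => Γ.dist u x = 2) with hDdef
    set s : Finset (V × V) :=
      Finset.univ.filter (fun p => Γ.Adj u p.1 ∧ Γ.Adj p.1 p.2 ∧ Γ.dist u p.2 = 2) with hsdef
    set O : Finset (V × V) :=
      Finset.univ.filter (fun p => ∃ g : G, φ g u = u ∧ φ g v = p.1 ∧ φ g w = p.2) with hOdef
    have hN : N.card = k := by
      have h := hreg u
      have : Γ.neighborSet u = ↑N := by ext x; simp [hNdef, SimpleGraph.mem_neighborSet]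
      rwa [this, Set.ncard_coe_finset] at h
    -- fibers of s over first coordinate
    have hsub1 : ∀ p ∈ s, p.1 ∈ N := by
      intro p hp; simp only [hsdef, Finset.mem_filter] at hp
      simp [hNdef, hp.2.1]
    have fib1 : ∀ a ∈ N, (s.filter (fun p => p.1 = a)).card = b₁ := by
      intro a ha
      have haN : Γ.Adj u a := by simpa [hNdef] using ha
      have hbs := hb₁ u a haN
      have hset : {x | Γ.Adj a x ∧ Γ.dist u x = 2} =
          ↑((Finset.univ.filter (fun x => Γ.Adj a x ∧ Γ.dist u x = 2))) := by
        ext x; simp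
      rw [hset, Set.ncard_coe_finset] at hbs
      rw [← hbs]
      apply Finset.card_bij (fun p _ => p.2)
      · intro p hp
        simp only [hsdef, Finset.mem_filter] at hp
        obtain ⟨⟨_, h1, h2, h3⟩, h4⟩ := hp
        subst h4; simp [h2, h3]
      · intro p hp q hq hpq
        simp only [Finset.mem_filter] at hp hq
        exact Prod.ext (hp.2.trans hq.2.symm) hpq
      · intro x hx
        simp only [Finset.mem_filter] at hx
        exact ⟨(a, x), by simp [hsdef, haN, hx.2.1, hx.2.2], rfl⟩
    have hscard : s.card = k * b₁ := by
      rw [Finset.card_eq_sum_card_fiberwise hsub1, Finset.sum_congr rfl fib1,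
        Finset.sum_const, smul_eq_mul, hN]
    -- fibers of s over second coordinate
    have hsub2 : ∀ p ∈ s, p.2 ∈ D := by
      intro p hp; simp only [hsdef, Finset.mem_filter] at hp
      simp [hDdef, hp.2.2.2]
    have fib2 : ∀ x ∈ D, (s.filter (fun p => p.2 = x)).card = c₂ := by
      intro x hx
      have hxD : Γ.dist u x = 2 := by simpa [hDdef] using hx
      have hcs := hc₂ u x hxD
      have hset : Γ.neighborSet u ∩ Γ.neighborSet x =
          ↑((Finset.univ.filter (fun y => Γ.Adj u y ∧ Γ.Adj x y))) := by
        ext y; simp [SimpleGraph.mem_neighborSet]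
      rw [hset, Set.ncard_coe_finset] at hcs
      rw [← hcs]
      apply Finset.card_bij (fun p _ => p.1)
      · intro p hp
        simp only [hsdef, Finset.mem_filter] at hp
        obtain ⟨⟨_, h1, h2, h3⟩, h4⟩ := hp
        subst h4; simp [h1, h2.symm]
      · intro p hp q hq hpq
        simp only [Finset.mem_filter] at hp hq
        exact Prod.ext hpq (hp.2.trans hq.2.symm)
      · intro y hy
        simp only [Finset.mem_filter] at hy
        exact ⟨(y, x), by simp [hsdef, hy.2.1, hy.2.2.symm, hxD], rfl⟩
    have hDcard : D.card * c₂ = k * b₁ := by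
      rw [← hscard, Finset.card_eq_sum_card_fiberwise hsub2, Finset.sum_congr rfl fib2,
        Finset.sum_const, smul_eq_mul]
    -- O is contained in s
    have hOs : O ⊆ s := by
      intro p hp
      simp only [hOdef, Finset.mem_filter] at hp
      obtain ⟨_, g, hgu, hgv, hgw⟩ := hp
      simp only [hsdef, Finset.mem_filter]
      refine ⟨Finset.mem_univ _, ?_, ?_, ?_⟩
      · rw [← hgu, ← hgv, haut]; exact huv
      · rw [← hgv, ← hgw, haut]; exact hvw
      · rw [← hgu, ← hgw, hdist]; exact hdw
    -- O is invariant under the stabilizer of u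
    have hOcl : ∀ (h : G), φ h u = u → ∀ p ∈ O, (φ h p.1, φ h p.2) ∈ O := by
      intro h hu p hp
      simp only [hOdef, Finset.mem_filter] at hp ⊢
      obtain ⟨_, g, hgu, hgv, hgw⟩ := hp
      exact ⟨Finset.mem_univ _, h * g, by simp [map_mul, hgu, hu, hgv, hgw]⟩
    -- moving fibers of O by stabilizer elements
    have move1 : ∀ (h : G) (a : V), φ h u = u →
        (O.filter (fun p => p.1 = a)).card ≤ (O.filter (fun p => p.1 = φ h a)).card := by
      intro h a hu
      apply Finset.card_le_card_of_injOn (fun p => (φ h p.1, φ h p.2))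
      · intro p hp
        simp only [Finset.mem_coe, Finset.mem_filter] at hp ⊢
        exact ⟨by have := hOcl h hu p hp.1; simpa using this, by rw [hp.2]⟩
      · intro p _ q _ hpq
        simp only [Prod.mk.injEq] at hpq
        exact Prod.ext (hinj h hpq.1) (hinj h hpq.2)
    have move2 : ∀ (h : G) (x : V), φ h u = u →
        (O.filter (fun p => p.2 = x)).card ≤ (O.filter (fun p => p.2 = φ h x)).card := by
      intro h x hu
      apply Finset.card_le_card_of_injOn (fun p => (φ h p.1, φ h p.2))
      · intro p hp
        simp only [Finset.mem_coe, Finset.mem_filter] at hp ⊢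
        exact ⟨by have := hOcl h hu p hp.1; simpa using this, by rw [hp.2]⟩
      · intro p _ q _ hpq
        simp only [Prod.mk.injEq] at hpq
        exact Prod.ext (hinj h hpq.1) (hinj h hpq.2)
    -- all first-coordinate fibers of O have the same cardinality m
    set m : ℕ := (O.filter (fun p => p.1 = v)).card with hmdef
    have fibO1 : ∀ a ∈ N, (O.filter (fun p => p.1 = a)).card = m := by
      intro a ha
      have haN : Γ.Adj u a := by simpa [hNdef] using ha
      obtain ⟨h, hu, hva⟩ := hs1 u v a huv haN
      have hu' : φ h⁻¹ u = u := by
        have := congrArg (φ h⁻¹) hu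
        simpa [map_inv] using (by rw [← this]; simp [map_inv] : φ h⁻¹ u = u)
      have hav : φ h⁻¹ a = v := by
        rw [← hva]; simp [map_inv]
      refine le_antisymm ?_ ?_
      · have := move1 h⁻¹ a hu'
        rwa [hav] at this
      · have := move1 h v hu
        rwa [hva] at this
    set m₂ : ℕ := (O.filter (fun p => p.2 = w)).card with hm2def
    have fibO2 : ∀ x ∈ D, (O.filter (fun p => p.2 = x)).card = m₂ := by
      intro x hx
      have hxD : Γ.dist u x = 2 := by simpa [hDdef] using hx
      obtain ⟨h, hu, hwx⟩ := hs2 u w x hdw hxD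
      have hu' : φ h⁻¹ u = u := by
        have h2 : φ h⁻¹ (φ h u) = u := by simp [map_inv]
        rwa [hu] at h2
      have hxw : φ h⁻¹ x = w := by
        rw [← hwx]; simp [map_inv]
      refine le_antisymm ?_ ?_
      · have := move2 h⁻¹ x hu'
        rwa [hxw] at this
      · have := move2 h w hu
        rwa [hwx] at this
    have hOcard1 : O.card = k * m := by
      rw [Finset.card_eq_sum_card_fiberwise (fun p hp => hsub1 p (hOs hp)),
        Finset.sum_congr rfl fibO1, Finset.sum_const, smul_eq_mul, hN]
    have hOcard2 : O.card = D.card * m₂ := by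
      rw [Finset.card_eq_sum_card_fiberwise (fun p hp => hsub2 p (hOs hp)),
        Finset.sum_congr rfl fibO2, Finset.sum_const, smul_eq_mul]
    -- basic positivity
    have hvwO : (v, w) ∈ O := by
      simp only [hOdef, Finset.mem_filter]
      exact ⟨Finset.mem_univ _, 1, by simp⟩
    have hOpos : 0 < O.card := Finset.card_pos.2 ⟨(v, w), hvwO⟩
    have hc₂pos : 0 < c₂ := by
      have h := hc₂ u w hdw
      have : v ∈ Γ.neighborSet u ∩ Γ.neighborSet w := ⟨huv, hvw.symm⟩
      have hne : (Γ.neighborSet u ∩ Γ.neighborSet w).Nonempty := ⟨v, this⟩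
      rw [← h]
      exact Set.Nonempty.ncard_pos (Set.toFinite _) hne
    have hkpos : 0 < k := lt_of_lt_of_le (by norm_num) hk
    -- arithmetic: k * b₁ ∣ O.card
    obtain ⟨m₀, hm₀⟩ := id hdvd
    have hm₀pos : 0 < m₀ := by
      rcases Nat.eq_zero_or_pos m₀ with h | h
      · rw [h, mul_zero] at hm₀; omega
      · exact h
    have hDval : D.card = m₀ * b₁ := by
      have : D.card * c₂ = (m₀ * b₁) * c₂ := by
        rw [hDcard, hm₀]; ring
      exact Nat.eq_of_mul_eq_mul_right hc₂pos this
    have hb₁m : b₁ ∣ m := by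
      have heq : m₀ * (b₁ * m₂) = m₀ * (c₂ * m) := by
        have := hOcard1.symm.trans hOcard2
        rw [hDval, hm₀] at this
        ring_nf at this ⊢
        linarith [this]
      have heq2 : b₁ * m₂ = c₂ * m := Nat.eq_of_mul_eq_mul_left hm₀pos heq
      have hco : Nat.Coprime b₁ c₂ := Nat.Coprime.coprime_dvd_right hdvd hcop
      exact hco.dvd_of_dvd_mul_left ⟨m₂, heq2.symm⟩
    have hdvdO : k * b₁ ∣ O.card := by
      rw [hOcard1]
      exact mul_dvd_mul_left k hb₁m
    have hOle : O.card ≤ s.card := Finset.card_le_card hOs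
    have hOeq : O.card = s.card := by
      have h1 : k * b₁ ≤ O.card := Nat.le_of_dvd hOpos hdvdO
      omega
    have hOS : O = s := Finset.eq_of_subset_of_card_le hOs (le_of_eq hOeq.symm)
    -- conclude
    have : (v', w') ∈ s := by
      simp only [hsdef, Finset.mem_filter]
      exact ⟨Finset.mem_univ _, huv', hvw', hdw'⟩
    rw [← hOS] at this
    simp only [hOdef, Finset.mem_filter] at this
    obtain ⟨_, g, hgu, hgv, hgw⟩ := this
    exact ⟨g, hgu, hgv, hgw⟩
  constructor
  · intro u v u' v' huv huv'
    obtain ⟨g₀, hg₀⟩ := hvt u u'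
    have hadj : Γ.Adj u' (φ g₀ v) := by rw [← hg₀, haut]; exact huv
    obtain ⟨h, hhu, hhv⟩ := hs1 u' (φ g₀ v) v' hadj huv'
    exact ⟨h * g₀, by simp [map_mul, hg₀, hhu, hhv]⟩
  · intro u v w u' v' w' huv hvw hdw huv' hvw' hdw'
    obtain ⟨g₀, hg₀⟩ := hvt u u'
    have h1 : Γ.Adj u' (φ g₀ v) := by rw [← hg₀, haut]; exact huv
    have h2 : Γ.Adj (φ g₀ v) (φ g₀ w) := by rw [haut]; exact hvw
    have h3 : Γ.dist u' (φ g₀ w) = 2 := by rw [← hg₀, hdist]; exact hdw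
    obtain ⟨h, hhu, hhv, hhw⟩ := key u' (φ g₀ v) (φ g₀ w) v' w' h1 h2 h3 huv' hvw' hdw'
    exact ⟨h * g₀, by simp [map_mul, hg₀, hhu, hhv, hhw]⟩
end

section
/- Let Γ be a connected (G,2)-distance-transitive graph of valency k ≥ 2 with gcd(c₂, k-1) = 1. Then either Γ has girth 3 or Γ is (G,2)-arc-transitive. -/
open Finset

/-- Let `Γ` be a connected `(G,2)`-distance-transitive graph of valency
`k ≥ 2` with `gcd(c₂, k - 1) = 1`. Then either `Γ` has girth `3` or `Γ` is
`(G,2)`-arc-transitive. -/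
theorem stmt9 {V : Type*} [Fintype V] (Γ : SimpleGraph V) (G : Type*) [Group G]
    (φ : G →* Equiv.Perm V)
    (haut : ∀ (g : G) (u v : V), Γ.Adj (φ g u) (φ g v) ↔ Γ.Adj u v)
    (k c₂ : ℕ) (hk : 2 ≤ k) (hconn : Γ.Connected)
    (hreg : ∀ v, (Γ.neighborSet v).ncard = k)
    (hc₂ : ∀ u w, Γ.dist u w = 2 → (Γ.neighborSet u ∩ Γ.neighborSet w).ncard = c₂)
    (hvt : ∀ u v : V, ∃ g : G, φ g u = v)
    (hs1 : ∀ u v w : V, Γ.Adj u v → Γ.Adj u w → ∃ g : G, φ g u = u ∧ φ g v = w)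
    (hs2 : ∀ u v w : V, Γ.dist u v = 2 → Γ.dist u w = 2 → ∃ g : G, φ g u = u ∧ φ g v = w)
    (hcop : Nat.gcd c₂ (k - 1) = 1) :
    Γ.egirth = 3 ∨
    (∀ u v w u' v' w' : V, Γ.Adj u v → Γ.Adj v w → u ≠ w →
      Γ.Adj u' v' → Γ.Adj v' w' → u' ≠ w' →
      ∃ g : G, φ g u = u' ∧ φ g v = v' ∧ φ g w = w') := by
  classical
  by_cases htri : ∃ a b c : V, Γ.Adj a b ∧ Γ.Adj b c ∧ Γ.Adj a c
  · left
    obtain ⟨a, b, c, hab, hbc, hac⟩ := htri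
    refine le_antisymm ?_ Γ.three_le_egirth
    have hcyc : (SimpleGraph.Walk.cons hab (SimpleGraph.Walk.cons hbc
        (SimpleGraph.Walk.cons hac.symm SimpleGraph.Walk.nil))).IsCycle := by
      simp [SimpleGraph.Walk.isCycle_def, SimpleGraph.Walk.isTrail_def, hab.ne, hbc.ne, hac.ne,
        hab.ne', hbc.ne', hac.ne', Sym2.eq, Sym2.rel_iff]
    calc Γ.egirth ≤ ((SimpleGraph.Walk.cons hab (SimpleGraph.Walk.cons hbc
          (SimpleGraph.Walk.cons hac.symm SimpleGraph.Walk.nil))).length : ℕ∞) :=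
          iInf_le_of_le a (iInf_le_of_le _ (iInf_le _ hcyc))
      _ = 3 := by simp
  · right
    push_neg at htri
    -- basic automorphism facts
    have hinj : ∀ (g : G) (x y : V), φ g x = φ g y → x = y := fun g x y h => (φ g).injective h
    have hinv : ∀ (g : G) (x y : V), φ g x = y → φ g⁻¹ y = x := by
      intro g x y h
      subst h
      rw [← Equiv.Perm.mul_apply, ← map_mul, inv_mul_cancel, map_one, Equiv.Perm.one_apply]
    -- degree counts as Finset cards
    have hcardN : ∀ x : V, (univ.filter fun y => Γ.Adj x y).card = k := by
      intro x
      have h := hreg x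
      rwa [show Γ.neighborSet x = ↑(univ.filter fun y => Γ.Adj x y) by ext y; simp,
        Set.ncard_coe_finset] at h
    -- distance 2 from a 2-arc
    have dist2 : ∀ u v w : V, Γ.Adj u v → Γ.Adj v w → w ≠ u → Γ.dist u w = 2 := by
      intro u v w huv hvw hwu
      have h2 : Γ.dist u w ≤ 2 := by
        have := Γ.dist_le (SimpleGraph.Walk.cons huv (SimpleGraph.Walk.cons hvw
          SimpleGraph.Walk.nil))
        simpa using this
      have h0 : Γ.dist u w ≠ 0 := by
        intro h
        exact hwu ((hconn.dist_eq_zero_iff.mp h).symm)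
      have h1 : Γ.dist u w ≠ 1 := by
        intro h
        exact htri u v w huv hvw (SimpleGraph.dist_eq_one_iff_adj.mp h)
      omega
    have hcardC : ∀ u w : V, Γ.dist u w = 2 →
        (univ.filter fun y => Γ.Adj u y ∧ Γ.Adj y w).card = c₂ := by
      intro u w h
      have h2 := hc₂ u w h
      rwa [show Γ.neighborSet u ∩ Γ.neighborSet w =
        ↑(univ.filter fun y => Γ.Adj u y ∧ Γ.Adj y w) by
          ext y
          simp only [Set.mem_inter_iff, SimpleGraph.mem_neighborSet, coe_filter,
            Set.mem_setOf_eq, mem_univ, true_and]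
          exact ⟨fun h => ⟨h.1, h.2.symm⟩, fun h => ⟨h.1, h.2.symm⟩⟩, Set.ncard_coe_finset] at h2
    -- the key lemma: transitivity on 2-arcs with same origin
    have key : ∀ u v₀ w₀ v' w' : V, Γ.Adj u v₀ → Γ.Adj v₀ w₀ → w₀ ≠ u →
        Γ.Adj u v' → Γ.Adj v' w' → w' ≠ u →
        ∃ g : G, φ g u = u ∧ φ g v₀ = v' ∧ φ g w₀ = w' := by
      intro u v₀ w₀ v' w' huv₀ hv₀w₀ hw₀u huv' hv'w' hw'u
      set A : Finset V := univ.filter fun x => Γ.Adj u x with hAdef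
      set D2 : Finset V := univ.filter fun x => Γ.dist u x = 2 with hD2def
      set F : Finset (V × V) := univ.filter fun p => Γ.Adj u p.1 ∧ Γ.Adj p.1 p.2 ∧ p.2 ≠ u
        with hFdef
      set O : Finset (V × V) := univ.filter fun p =>
        ∃ g : G, φ g u = u ∧ φ g v₀ = p.1 ∧ φ g w₀ = p.2 with hOdef
      have hAk : A.card = k := hcardN u
      have hOF : O ⊆ F := by
        intro p hp
        rw [hOdef, mem_filter] at hp
        obtain ⟨-, g, hgu, hgv, hgw⟩ := hp
        rw [hFdef, mem_filter]
        refine ⟨mem_univ _, ?_, ?_, ?_⟩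
        · rw [← hgu, ← hgv, haut]; exact huv₀
        · rw [← hgv, ← hgw, haut]; exact hv₀w₀
        · rw [← hgw]
          intro h
          exact hw₀u (hinj g _ _ (h.trans hgu.symm))
      -- F fiber cards over first coordinate
      have hFfib1 : ∀ v ∈ A, (F.filter fun p => p.1 = v).card = k - 1 := by
        intro v hv
        rw [hAdef, mem_filter] at hv
        have heq : F.filter (fun p => p.1 = v) =
            ((univ.filter fun y => Γ.Adj v y).erase u).image fun y => (v, y) := by
          ext ⟨x, y⟩
          simp only [hFdef, mem_filter, mem_image, mem_erase, mem_univ, true_and, Prod.mk.injEq]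
          constructor
          · rintro ⟨⟨-, hxy, hyu⟩, rfl⟩
            exact ⟨y, ⟨hyu, hxy⟩, rfl, rfl⟩
          · rintro ⟨z, ⟨hzu, hvz⟩, rfl, rfl⟩
            exact ⟨⟨hv.2, hvz, hzu⟩, rfl⟩
        rw [heq, card_image_of_injective _ (fun a b h => by simpa using h), card_erase_of_mem,
          hcardN v]
        simp [hv.2.symm]
      have hFfst : ∀ p ∈ F, p.1 ∈ A := by
        intro p hp
        rw [hFdef, mem_filter] at hp
        rw [hAdef, mem_filter]
        exact ⟨mem_univ _, hp.2.1⟩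
      have hFsnd : ∀ p ∈ F, p.2 ∈ D2 := by
        intro p hp
        rw [hFdef, mem_filter] at hp
        rw [hD2def, mem_filter]
        exact ⟨mem_univ _, dist2 u p.1 p.2 hp.2.1 hp.2.2.1 hp.2.2.2⟩
      have hFfib2 : ∀ w ∈ D2, (F.filter fun p => p.2 = w).card = c₂ := by
        intro w hw
        rw [hD2def, mem_filter] at hw
        have heq : F.filter (fun p => p.2 = w) =
            (univ.filter fun y => Γ.Adj u y ∧ Γ.Adj y w).image fun y => (y, w) := by
          ext ⟨x, y⟩
          simp only [hFdef, mem_filter, mem_image, mem_univ, true_and, Prod.mk.injEq]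
          constructor
          · rintro ⟨⟨hux, hxy, -⟩, rfl⟩
            exact ⟨x, ⟨hux, hxy⟩, rfl, rfl⟩
          · rintro ⟨z, ⟨huz, hzw⟩, rfl, rfl⟩
            refine ⟨⟨huz, hzw, ?_⟩, rfl⟩
            intro h; subst h
            rw [Γ.dist_self] at hw
            omega
        rw [heq, card_image_of_injective _ (fun a b h => by simpa using h), hcardC u w hw.2]
      have hFcard1 : F.card = k * (k - 1) := by
        rw [card_eq_sum_card_fiberwise hFfst, Finset.sum_congr rfl hFfib1, sum_const, hAk,
          smul_eq_mul]
      have hFcard2 : F.card = D2.card * c₂ := by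
        rw [card_eq_sum_card_fiberwise hFsnd, Finset.sum_congr rfl hFfib2, sum_const,
          smul_eq_mul]
      -- O fibers: translation lemma
      have htrans : ∀ (g : G), φ g u = u → ∀ x y : V,
          (O.filter fun p => p.1 = x).card ≤ (O.filter fun p => p.1 = φ g x).card := by
        intro g hgu x y
        apply card_le_card_of_injOn (fun p => (φ g p.1, φ g p.2))
        · intro p hp
          rw [Finset.mem_coe, mem_filter] at hp ⊢
          obtain ⟨hpO, hpx⟩ := hp
          rw [hOdef, mem_filter] at hpO ⊢
          obtain ⟨-, h, hhu, hhv, hhw⟩ := hpO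
          refine ⟨⟨mem_univ _, g * h, ?_, ?_, ?_⟩, by simp [hpx]⟩
          · rw [map_mul, Equiv.Perm.mul_apply, hhu, hgu]
          · rw [map_mul, Equiv.Perm.mul_apply, hhv]
          · rw [map_mul, Equiv.Perm.mul_apply, hhw]
        · intro p hp q hq h
          simp only [Prod.mk.injEq] at h
          exact Prod.ext (hinj g _ _ h.1) (hinj g _ _ h.2)
      have htrans2 : ∀ (g : G), φ g u = u → ∀ x y : V,
          (O.filter fun p => p.2 = x).card ≤ (O.filter fun p => p.2 = φ g x).card := by
        intro g hgu x y
        apply card_le_card_of_injOn (fun p => (φ g p.1, φ g p.2))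
        · intro p hp
          rw [Finset.mem_coe, mem_filter] at hp ⊢
          obtain ⟨hpO, hpx⟩ := hp
          rw [hOdef, mem_filter] at hpO ⊢
          obtain ⟨-, h, hhu, hhv, hhw⟩ := hpO
          refine ⟨⟨mem_univ _, g * h, ?_, ?_, ?_⟩, by simp [hpx]⟩
          · rw [map_mul, Equiv.Perm.mul_apply, hhu, hgu]
          · rw [map_mul, Equiv.Perm.mul_apply, hhv]
          · rw [map_mul, Equiv.Perm.mul_apply, hhw]
        · intro p hp q hq h
          simp only [Prod.mk.injEq] at h
          exact Prod.ext (hinj g _ _ h.1) (hinj g _ _ h.2)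
      set a : ℕ := (O.filter fun p => p.1 = v₀).card with hadef
      set b : ℕ := (O.filter fun p => p.2 = w₀).card with hbdef
      have hOfib1 : ∀ v ∈ A, (O.filter fun p => p.1 = v).card = a := by
        intro v hv
        rw [hAdef, mem_filter] at hv
        obtain ⟨g, hgu, hgv⟩ := hs1 u v₀ v huv₀ hv.2
        have h1 := htrans g hgu v₀ v₀
        rw [hgv] at h1
        have hgu' : φ g⁻¹ u = u := hinv g u u hgu
        have hgv' : φ g⁻¹ v = v₀ := hinv g v₀ v hgv
        have h2 := htrans g⁻¹ hgu' v v
        rw [hgv'] at h2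
        exact le_antisymm h2 h1
      have hw₀D2 : Γ.dist u w₀ = 2 := dist2 u v₀ w₀ huv₀ hv₀w₀ hw₀u
      have hOfib2 : ∀ w ∈ D2, (O.filter fun p => p.2 = w).card = b := by
        intro w hw
        rw [hD2def, mem_filter] at hw
        obtain ⟨g, hgu, hgw⟩ := hs2 u w₀ w hw₀D2 hw.2
        have h1 := htrans2 g hgu w₀ w₀
        rw [hgw] at h1
        have hgu' : φ g⁻¹ u = u := hinv g u u hgu
        have hgw' : φ g⁻¹ w = w₀ := hinv g w₀ w hgw
        have h2 := htrans2 g⁻¹ hgu' w w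
        rw [hgw'] at h2
        exact le_antisymm h2 h1
      have hOcard1 : O.card = k * a := by
        rw [card_eq_sum_card_fiberwise (fun p hp => hFfst p (hOF hp)),
          Finset.sum_congr rfl hOfib1, sum_const, hAk, smul_eq_mul]
      have hOcard2 : O.card = D2.card * b := by
        rw [card_eq_sum_card_fiberwise (fun p hp => hFsnd p (hOF hp)),
          Finset.sum_congr rfl hOfib2, sum_const, smul_eq_mul]
      have hmem : (v₀, w₀) ∈ O := by
        rw [hOdef, mem_filter]
        exact ⟨mem_univ _, 1, by simp, by simp, by simp⟩
      have ha1 : 1 ≤ a := by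
        rw [hadef, Nat.one_le_iff_ne_zero, ← Nat.pos_iff_ne_zero, card_pos]
        exact ⟨(v₀, w₀), mem_filter.mpr ⟨hmem, rfl⟩⟩
      have hak : a ≤ k - 1 := by
        rw [hadef]
        have := hFfib1 v₀ (mem_filter.mpr ⟨mem_univ _, huv₀⟩)
        rw [← this]
        exact card_le_card (filter_subset_filter _ hOF)
      -- the arithmetic
      have harith : a * c₂ = (k - 1) * b := by
        have h1 : k * (a * c₂) = k * ((k - 1) * b) := by
          calc k * (a * c₂) = (k * a) * c₂ := by ring
            _ = (D2.card * b) * c₂ := by rw [← hOcard1, hOcard2]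
            _ = (D2.card * c₂) * b := by ring
            _ = (k * (k - 1)) * b := by rw [← hFcard2, hFcard1]
            _ = k * ((k - 1) * b) := by ring
        exact Nat.eq_of_mul_eq_mul_left (by omega) h1
      have hdvd : (k - 1) ∣ a := by
        have hco : Nat.Coprime (k - 1) c₂ := Nat.coprime_comm.mp hcop
        exact hco.dvd_of_dvd_mul_right ⟨b, harith⟩
      have ha : a = k - 1 := le_antisymm hak (Nat.le_of_dvd ha1 hdvd)
      have hOeq : O = F := by
        apply Finset.eq_of_subset_of_card_le hOF
        rw [hFcard1, hOcard1, ha]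
      have hmem' : (v', w') ∈ O := by
        rw [hOeq, hFdef, mem_filter]
        exact ⟨mem_univ _, huv', hv'w', hw'u⟩
      rw [hOdef, mem_filter] at hmem'
      exact hmem'.2
    -- assemble full 2-arc transitivity
    intro u v w u' v' w' huv hvw huw hu'v' hv'w' hu'w'
    obtain ⟨g₁, hg₁⟩ := hvt u u'
    have h1 : Γ.Adj u' (φ g₁ v) := by rw [← hg₁, haut]; exact huv
    have h2 : Γ.Adj (φ g₁ v) (φ g₁ w) := by rw [haut]; exact hvw
    have h3 : φ g₁ w ≠ u' := by
      rw [← hg₁]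
      intro h
      exact huw (hinj g₁ _ _ h.symm)
    obtain ⟨g₂, hg₂u, hg₂v, hg₂w⟩ :=
      key u' (φ g₁ v) (φ g₁ w) v' w' h1 h2 h3 hu'v' hv'w' (Ne.symm hu'w')
    refine ⟨g₂ * g₁, ?_, ?_, ?_⟩
    · rw [map_mul, Equiv.Perm.mul_apply, hg₁, hg₂u]
    · rw [map_mul, Equiv.Perm.mul_apply, hg₂v]
    · rw [map_mul, Equiv.Perm.mul_apply, hg₂w]
end

section
/- Let Γ be a connected 2-distance-transitive graph of valency p + 1, where p is a prime. If Γ has girth at least 4, then Γ is 2-arc-transitive. -/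
/-- `Γ` is 2-distance-transitive (with respect to its full automorphism group):
vertex-transitive, and each vertex stabilizer is transitive on the first and second
step neighborhoods. -/
def TwoDistanceTransitive {V : Type*} (Γ : SimpleGraph V) : Prop :=
  (∀ u v : V, ∃ g : Γ ≃g Γ, g u = v) ∧
  (∀ u v w : V, Γ.Adj u v → Γ.Adj u w → ∃ g : Γ ≃g Γ, g u = u ∧ g v = w) ∧
  (∀ u v w : V, Γ.dist u v = 2 → Γ.dist u w = 2 → ∃ g : Γ ≃g Γ, g u = u ∧ g v = w)

/-- `Γ` is 2-arc-transitive: vertex-transitive and transitive on 2-arcs `(u,v,w)`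
with `u ≠ w` and both `u`, `w` adjacent to `v`. -/
def TwoArcTransitive {V : Type*} (Γ : SimpleGraph V) : Prop :=
  (∀ u v : V, ∃ g : Γ ≃g Γ, g u = v) ∧
  (∀ u v w u' v' w' : V, Γ.Adj u v → Γ.Adj v w → u ≠ w →
    Γ.Adj u' v' → Γ.Adj v' w' → u' ≠ w' →
    ∃ g : Γ ≃g Γ, g u = u' ∧ g v = v' ∧ g w = w')

section Stmt10Aux
open SimpleGraph Finset
set_option linter.unusedSectionVars false
set_option maxHeartbeats 2000000

namespace Stmt10Aux
variable {V : Type*} [Fintype V] [DecidableEq V] {Γ : SimpleGraph V} [DecidableRel Γ.Adj]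
variable {p : ℕ}

abbrev nb (Γ : SimpleGraph V) [DecidableRel Γ.Adj] (u : V) : Finset V := Γ.neighborFinset u
noncomputable def d2 (Γ : SimpleGraph V) (u : V) : Finset V :=
  univ.filter (fun y => Γ.dist u y = 2)
lemma mem_d2 {u y : V} : y ∈ d2 Γ u ↔ Γ.dist u y = 2 := by simp [d2]

lemma iso_dist_le (g : Γ ≃g Γ) (a b : V) : Γ.dist (g a) (g b) ≤ Γ.dist a b := by
  by_cases h : Γ.Reachable a b
  · obtain ⟨W, hW⟩ := h.exists_walk_length_eq_dist
    calc Γ.dist (g a) (g b) ≤ (W.map g.toHom).length := SimpleGraph.dist_le _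
    _ = Γ.dist a b := by rw [SimpleGraph.Walk.length_map, hW]
  · have h2 : ¬ Γ.Reachable (g a) (g b) := by
      intro ⟨W⟩
      exact h ⟨(W.map g.symm.toHom).copy (by simp) (by simp)⟩
    rw [SimpleGraph.dist_eq_zero_of_not_reachable h, SimpleGraph.dist_eq_zero_of_not_reachable h2]

lemma iso_dist (g : Γ ≃g Γ) (a b : V) : Γ.dist (g a) (g b) = Γ.dist a b := by
  refine le_antisymm (iso_dist_le g a b) ?_
  have := iso_dist_le g.symm (g a) (g b)
  simpa using this

lemma notri' (hg : 4 ≤ Γ.egirth) {a b c : V} (hab : Γ.Adj a b) (hbc : Γ.Adj b c)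
    (hac : Γ.Adj a c) : False := by
  have hnac : a ≠ c := hac.ne
  have hcyc : (SimpleGraph.Walk.cons hab (.cons hbc (.cons hac.symm .nil))).IsCycle := by
    rw [SimpleGraph.Walk.cons_isCycle_iff]
    constructor
    · rw [SimpleGraph.Walk.isPath_def]
      simp [SimpleGraph.Walk.support_cons, hbc.ne, hnac, hac.symm.ne, hab.ne']
    · simp only [SimpleGraph.Walk.edges_cons, SimpleGraph.Walk.edges_nil, List.mem_cons]
      push_neg
      refine ⟨?_, ?_, by simp⟩ <;> intro h <;> rw [Sym2.eq_iff] at h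
      · rcases h with ⟨h1, h2⟩ | ⟨h1, h2⟩
        · exact hab.ne h1
        · exact hnac h1
      · rcases h with ⟨h1, h2⟩ | ⟨h1, h2⟩
        · exact hnac h1
        · exact hbc.ne h2
  have := SimpleGraph.le_egirth.mp hg a _ hcyc
  simp only [SimpleGraph.Walk.length_cons, SimpleGraph.Walk.length_nil] at this
  norm_num at this

lemma dist_two (hg : 4 ≤ Γ.egirth) {u v w : V} (h1 : Γ.Adj u v) (h2 : Γ.Adj v w)
    (h3 : w ≠ u) : Γ.dist u w = 2 := by
  have hle : Γ.dist u w ≤ 2 := by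
    have := SimpleGraph.dist_le (SimpleGraph.Walk.cons h1 (.cons h2 .nil))
    simpa using this
  have hne0 : Γ.dist u w ≠ 0 := by
    intro h0
    exact h3 ((SimpleGraph.Reachable.dist_eq_zero_iff ⟨.cons h1 (.cons h2 .nil)⟩).mp h0).symm
  have hne1 : Γ.dist u w ≠ 1 := by
    intro h11
    exact notri' hg h1 h2 (SimpleGraph.dist_eq_one_iff_adj.mp h11)
  omega

lemma dist_pred (hconn : Γ.Connected) {u y : V} {n : ℕ} (h : Γ.dist u y = n + 1) :
    ∃ z, Γ.Adj z y ∧ Γ.dist u z = n := by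
  obtain ⟨W, hW⟩ := (hconn u y).exists_walk_length_eq_dist
  rw [h] at hW
  set R := W.reverse with hR
  have hRlen : R.length = n + 1 := by rw [hR, SimpleGraph.Walk.length_reverse, hW]
  have hnil : ¬ R.Nil := by
    rw [SimpleGraph.Walk.not_nil_iff_lt_length]; omega
  refine ⟨R.getVert 1, (SimpleGraph.Walk.adj_snd hnil).symm, ?_⟩
  have h1 : Γ.dist u (R.getVert 1) ≤ n := by
    have := SimpleGraph.dist_le R.tail.reverse
    have hlt : R.tail.length = n := by
      have := SimpleGraph.Walk.length_tail_add_one hnil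
      omega
    rwa [SimpleGraph.Walk.length_reverse, hlt] at this
  have h2 : Γ.dist u y ≤ Γ.dist u (R.getVert 1) + 1 := by
    calc Γ.dist u y ≤ Γ.dist u (R.getVert 1) + Γ.dist (R.getVert 1) y :=
      hconn.dist_triangle
    _ ≤ Γ.dist u (R.getVert 1) + 1 := by
      gcongr
      exact SimpleGraph.dist_le (SimpleGraph.Walk.adj_snd hnil).symm.toWalk
  omega

lemma dist_two_mid (hconn : Γ.Connected) {u w : V} (h : Γ.dist u w = 2) :
    ∃ v, Γ.Adj u v ∧ Γ.Adj v w := by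
  obtain ⟨z, hz1, hz2⟩ := dist_pred hconn h
  rw [SimpleGraph.dist_eq_one_iff_adj] at hz2
  exact ⟨z, hz2, hz1⟩

lemma deg_eq {p : ℕ} (hreg : ∀ v, (Γ.neighborSet v).ncard = p + 1) (v : V) :
    (nb Γ v).card = p + 1 := by
  rw [show (nb Γ v) = (Γ.neighborSet v).toFinset from rfl, ← Set.ncard_eq_toFinset_card',
    hreg]

/-- the filtered second neighborhood of a neighbor has size `p` -/
lemma nbv_card {p : ℕ} (hg : 4 ≤ Γ.egirth) (hreg : ∀ v, (Γ.neighborSet v).ncard = p + 1)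
    {u v : V} (huv : Γ.Adj u v) : ((d2 Γ u).filter (Γ.Adj v ·)).card = p := by
  have heq : (d2 Γ u).filter (Γ.Adj v ·) = (nb Γ v).erase u := by
    ext y
    simp only [mem_filter, mem_d2, mem_erase, mem_neighborFinset]
    constructor
    · rintro ⟨hd, ha⟩
      refine ⟨fun h => ?_, ha⟩
      subst h; simp [SimpleGraph.dist_self] at hd
    · rintro ⟨hne, ha⟩
      exact ⟨dist_two hg huv ha hne, ha⟩
  rw [heq, card_erase_of_mem (by rw [mem_neighborFinset]; exact huv.symm), deg_eq hreg]
  omega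

lemma common_const (h2dt : TwoDistanceTransitive Γ) {a b a' b' : V}
    (hab : Γ.dist a b = 2) (hab' : Γ.dist a' b' = 2) :
    ((nb Γ a) ∩ (nb Γ b)).card = ((nb Γ a') ∩ (nb Γ b')).card := by
  obtain ⟨g1, hg1⟩ := h2dt.1 a a'
  have hd : Γ.dist a' (g1 b) = 2 := by rw [← hg1, iso_dist]; exact hab
  obtain ⟨g2, hg2a, hg2b⟩ := h2dt.2.2 a' (g1 b) b' hd hab'
  set f : Γ ≃g Γ := g1.trans g2 with hf
  have hfa : f a = a' := by simp only [hf, RelIso.trans_apply, hg1, hg2a]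
  have hfb : f b = b' := by simp only [hf, RelIso.trans_apply, hg2b]
  refine Finset.card_bij' (fun x _ => f x) (fun y _ => f.symm y) ?_ ?_ ?_ ?_
  · intro x hx
    simp only [mem_inter, mem_neighborFinset] at hx ⊢
    rw [← hfa, ← hfb]
    exact ⟨f.map_rel_iff.mpr hx.1, f.map_rel_iff.mpr hx.2⟩
  · intro y hy
    simp only [mem_inter, mem_neighborFinset] at hy ⊢
    constructor
    · have : Γ.Adj (f.symm a') (f.symm y) := f.symm.map_rel_iff.mpr hy.1
      rwa [← hfa, RelIso.symm_apply_apply] at this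
    · have : Γ.Adj (f.symm b') (f.symm y) := f.symm.map_rel_iff.mpr hy.2
      rwa [← hfb, RelIso.symm_apply_apply] at this
  · intro x _; exact RelIso.symm_apply_apply f x
  · intro y _; exact RelIso.apply_symm_apply f y

lemma edge_count {p c2 : ℕ} (hg : 4 ≤ Γ.egirth)
    (hreg : ∀ v, (Γ.neighborSet v).ncard = p + 1) (u : V)
    (hc2 : ∀ w ∈ d2 Γ u, ((nb Γ u) ∩ (nb Γ w)).card = c2) :
    (d2 Γ u).card * c2 = (p + 1) * p := by
  set P : Finset (V × V) := ((nb Γ u) ×ˢ (d2 Γ u)).filter (fun q => Γ.Adj q.1 q.2) with hP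
  have hmem : ∀ q : V × V, q ∈ P ↔ Γ.Adj u q.1 ∧ Γ.dist u q.2 = 2 ∧ Γ.Adj q.1 q.2 := by
    intro q
    simp only [hP, mem_filter, Finset.mem_product, mem_d2, mem_neighborFinset, and_assoc]
  have h1 : P.card = (p + 1) * p := by
    rw [Finset.card_eq_sum_card_fiberwise (f := Prod.fst) (t := nb Γ u)
      (fun q hq => (Finset.mem_product.mp (Finset.mem_filter.mp hq).1).1)]
    rw [Finset.sum_congr rfl (fun v hv => ?_), Finset.sum_const, smul_eq_mul, deg_eq hreg]
    rw [mem_neighborFinset] at hv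
    show (P.filter (fun q => q.1 = v)).card = p
    rw [← nbv_card hg hreg hv]
    refine Finset.card_bij' (fun q _ => q.2) (fun w _ => (v, w)) ?_ ?_ ?_ ?_
    · intro q hq
      rw [mem_filter] at hq
      obtain ⟨hqP, hq1⟩ := hq
      rw [hmem] at hqP
      rw [mem_filter, mem_d2]
      exact ⟨hqP.2.1, hq1 ▸ hqP.2.2⟩
    · intro w hw
      rw [mem_filter, mem_d2] at hw
      rw [mem_filter, hmem]
      exact ⟨⟨hv, hw.1, hw.2⟩, rfl⟩
    · intro q hq
      rw [mem_filter] at hq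
      exact Prod.ext hq.2.symm rfl
    · intro w _; rfl
  have h2 : P.card = (d2 Γ u).card * c2 := by
    rw [Finset.card_eq_sum_card_fiberwise (f := Prod.snd) (t := d2 Γ u)
      (fun q hq => (Finset.mem_product.mp (Finset.mem_filter.mp hq).1).2)]
    rw [Finset.sum_congr rfl (fun w hw => ?_), Finset.sum_const, smul_eq_mul]
    show (P.filter (fun q => q.2 = w)).card = c2
    rw [← hc2 w hw]
    rw [mem_d2] at hw
    refine Finset.card_bij' (fun q _ => q.1) (fun x _ => (x, w)) ?_ ?_ ?_ ?_
    · intro q hq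
      rw [mem_filter] at hq
      obtain ⟨hqP, hq1⟩ := hq
      rw [hmem] at hqP
      rw [mem_inter, mem_neighborFinset, mem_neighborFinset]
      exact ⟨hqP.1, hq1 ▸ hqP.2.2.symm⟩
    · intro x hx
      rw [mem_inter, mem_neighborFinset, mem_neighborFinset] at hx
      rw [mem_filter, hmem]
      exact ⟨⟨hx.1, hw, hx.2.symm⟩, rfl⟩
    · intro q hq
      rw [mem_filter] at hq
      exact Prod.ext rfl hq.2.symm
    · intro x _; rfl
  omega

lemma caseA {p c2 : ℕ} (hp : p.Prime) (hg : 4 ≤ Γ.egirth)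
    (hreg : ∀ v, (Γ.neighborSet v).ncard = p + 1)
    (h2dt : TwoDistanceTransitive Γ)
    (hc2 : ∀ a b : V, Γ.dist a b = 2 → ((nb Γ a) ∩ (nb Γ b)).card = c2)
    (hnd : ¬ p ∣ c2)
    {u v w v' w' : V} (huv : Γ.Adj u v) (hvw : Γ.Adj v w) (hwu : w ≠ u)
    (huv' : Γ.Adj u v') (hvw' : Γ.Adj v' w') (hwu' : w' ≠ u) :
    ∃ g : Γ ≃g Γ, g u = u ∧ g v = v' ∧ g w = w' := by
  classical
  have hduw : Γ.dist u w = 2 := dist_two hg huv hvw hwu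
  have hduw' : Γ.dist u w' = 2 := dist_two hg huv' hvw' hwu'
  set S : Finset (V × V) := ((nb Γ u) ×ˢ (d2 Γ u)).filter
    (fun q => ∃ g : Γ ≃g Γ, g u = u ∧ g v = q.1 ∧ g w = q.2) with hS
  have hmemS : ∀ q : V × V, q ∈ S ↔ ∃ g : Γ ≃g Γ, g u = u ∧ g v = q.1 ∧ g w = q.2 := by
    intro q
    rw [hS, mem_filter, Finset.mem_product, and_iff_right_iff_imp]
    rintro ⟨g, hgu, hgv, hgw⟩
    constructor
    · rw [mem_neighborFinset, ← hgu, ← hgv]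
      exact g.map_rel_iff.mpr huv
    · rw [mem_d2, ← hgu, ← hgw, iso_dist]
      exact hduw
  -- fiber over first coordinate is constant
  have hfib1 : ∀ v₁ ∈ nb Γ u, ∀ v₂ ∈ nb Γ u,
      (S.filter (fun q => q.1 = v₁)).card = (S.filter (fun q => q.1 = v₂)).card := by
    intro v₁ hv₁ v₂ hv₂
    rw [mem_neighborFinset] at hv₁ hv₂
    obtain ⟨g, hgu, hgv⟩ := h2dt.2.1 u v₁ v₂ hv₁ hv₂
    refine Finset.card_bij' (fun q _ => (g q.1, g q.2)) (fun q _ => (g.symm q.1, g.symm q.2))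
      ?_ ?_ ?_ ?_
    · intro q hq
      rw [mem_filter] at hq
      obtain ⟨hqS, hq1⟩ := hq
      rw [hmemS] at hqS
      obtain ⟨h, hhu, hhv, hhw⟩ := hqS
      rw [mem_filter, hmemS]
      exact ⟨⟨h.trans g, by simp [RelIso.trans_apply, hhu, hgu],
        by simp [RelIso.trans_apply, hhv, hq1, hgv],
        by simp [RelIso.trans_apply, hhw]⟩, by simp [hq1, hgv]⟩
    · intro q hq
      rw [mem_filter] at hq
      obtain ⟨hqS, hq1⟩ := hq
      rw [hmemS] at hqS
      obtain ⟨h, hhu, hhv, hhw⟩ := hqS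
      have hgsu : g.symm u = u := g.toEquiv.injective (by simp [hgu])
      have hgsv : g.symm v₂ = v₁ := g.toEquiv.injective (by simp [hgv])
      rw [mem_filter, hmemS]
      exact ⟨⟨h.trans g.symm, by simp [RelIso.trans_apply, hhu, hgsu, hgu],
        by simp [RelIso.trans_apply, hhv, hq1, hgsv, hgv],
        by simp [RelIso.trans_apply, hhw]⟩, by simp [hq1, hgsv, hgv]⟩
    · intro q _; exact Prod.ext (g.symm_apply_apply q.1) (g.symm_apply_apply q.2)
    · intro q _; exact Prod.ext (g.apply_symm_apply q.1) (g.apply_symm_apply q.2)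
  -- fiber over second coordinate is constant
  have hfib2 : ∀ w₁ ∈ d2 Γ u, ∀ w₂ ∈ d2 Γ u,
      (S.filter (fun q => q.2 = w₁)).card = (S.filter (fun q => q.2 = w₂)).card := by
    intro w₁ hw₁ w₂ hw₂
    rw [mem_d2] at hw₁ hw₂
    obtain ⟨g, hgu, hgv⟩ := h2dt.2.2 u w₁ w₂ hw₁ hw₂
    refine Finset.card_bij' (fun q _ => (g q.1, g q.2)) (fun q _ => (g.symm q.1, g.symm q.2))
      ?_ ?_ ?_ ?_
    · intro q hq
      rw [mem_filter] at hq
      obtain ⟨hqS, hq1⟩ := hq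
      rw [hmemS] at hqS
      obtain ⟨h, hhu, hhv, hhw⟩ := hqS
      rw [mem_filter, hmemS]
      exact ⟨⟨h.trans g, by simp [RelIso.trans_apply, hhu, hgu],
        by simp [RelIso.trans_apply, hhv],
        by simp [RelIso.trans_apply, hhw, hq1, hgv]⟩, by simp [hq1, hgv]⟩
    · intro q hq
      rw [mem_filter] at hq
      obtain ⟨hqS, hq1⟩ := hq
      rw [hmemS] at hqS
      obtain ⟨h, hhu, hhv, hhw⟩ := hqS
      have hgsu : g.symm u = u := g.toEquiv.injective (by simp [hgu])
      have hgsv : g.symm w₂ = w₁ := g.toEquiv.injective (by simp [hgv])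
      rw [mem_filter, hmemS]
      exact ⟨⟨h.trans g.symm, by simp [RelIso.trans_apply, hhu, hgsu, hgu],
        by simp [RelIso.trans_apply, hhv],
        by simp [RelIso.trans_apply, hhw, hq1, hgsv, hgv]⟩, by simp [hq1, hgsv, hgv]⟩
    · intro q _; exact Prod.ext (g.symm_apply_apply q.1) (g.symm_apply_apply q.2)
    · intro q _; exact Prod.ext (g.apply_symm_apply q.1) (g.apply_symm_apply q.2)
  set f := (S.filter (fun q => q.1 = v)).card with hf
  set e := (S.filter (fun q => q.2 = w)).card with he
  have hvmem : v ∈ nb Γ u := by rwa [mem_neighborFinset]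
  have hwmem : w ∈ d2 Γ u := by rwa [mem_d2]
  have hv'mem : v' ∈ nb Γ u := by rwa [mem_neighborFinset]
  have hw'mem : w' ∈ d2 Γ u := by rwa [mem_d2]
  have hvw_mem : (v, w) ∈ S := by
    rw [hmemS]
    exact ⟨RelIso.refl Γ.Adj, rfl, rfl, rfl⟩
  have hcard1 : S.card = (p + 1) * f := by
    rw [Finset.card_eq_sum_card_fiberwise (f := Prod.fst) (t := nb Γ u)
      (fun q hq => (Finset.mem_product.mp (Finset.mem_filter.mp hq).1).1)]
    rw [Finset.sum_congr rfl (fun v₁ hv₁ => hfib1 v₁ hv₁ v hvmem), Finset.sum_const,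
      smul_eq_mul, deg_eq hreg]
  have hcard2 : S.card = (d2 Γ u).card * e := by
    rw [Finset.card_eq_sum_card_fiberwise (f := Prod.snd) (t := d2 Γ u)
      (fun q hq => (Finset.mem_product.mp (Finset.mem_filter.mp hq).1).2)]
    rw [Finset.sum_congr rfl (fun w₁ hw₁ => hfib2 w₁ hw₁ w hwmem), Finset.sum_const,
      smul_eq_mul]
  have hm : (d2 Γ u).card * c2 = (p + 1) * p :=
    edge_count hg hreg u (fun w₁ hw₁ => hc2 u w₁ (mem_d2.mp hw₁))
  have hfle : f ≤ p := by
    rw [← nbv_card hg hreg huv]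
    apply Finset.card_le_card_of_injOn (fun q => q.2)
    · intro q hq
      rw [mem_coe, mem_filter] at hq
      obtain ⟨hqS, hq1⟩ := hq
      have := (hmemS q).mp hqS
      obtain ⟨h, hhu, hhv, hhw⟩ := this
      rw [mem_coe, mem_filter]
      refine ⟨(Finset.mem_product.mp (Finset.mem_filter.mp hqS).1).2, ?_⟩
      show Γ.Adj v q.2
      rw [← hq1, ← hhv, ← hhw]
      exact h.map_rel_iff.mpr hvw
    · intro q₁ h₁ q₂ h₂ heq
      rw [mem_coe, mem_filter] at h₁ h₂
      exact Prod.ext (h₁.2.trans h₂.2.symm) heq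
  have hfpos : 1 ≤ f := by
    rw [hf]
    refine Finset.card_pos.mpr ⟨(v, w), ?_⟩
    rw [mem_filter]
    exact ⟨hvw_mem, rfl⟩
  have hepos : 1 ≤ e := by
    rw [he]
    refine Finset.card_pos.mpr ⟨(v, w), ?_⟩
    rw [mem_filter]
    exact ⟨hvw_mem, rfl⟩
  -- arithmetic: f * c2 = e * p
  have harith : f * c2 = e * p := by
    have h1 : (p + 1) * (f * c2) = (p + 1) * (e * p) := by
      calc (p + 1) * (f * c2) = ((p + 1) * f) * c2 := by ring
      _ = ((d2 Γ u).card * e) * c2 := by rw [← hcard1, hcard2]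
      _ = e * ((d2 Γ u).card * c2) := by ring
      _ = e * ((p + 1) * p) := by rw [hm]
      _ = (p + 1) * (e * p) := by ring
    exact Nat.eq_of_mul_eq_mul_left (by omega) h1
  have hpf : f = p := by
    have hdvd : p ∣ f * c2 := by rw [harith]; exact dvd_mul_left p e
    rcases (Nat.Prime.dvd_mul hp).mp hdvd with h | h
    · exact Nat.le_antisymm hfle (Nat.le_of_dvd (by omega) h)
    · exact absurd h hnd
  -- conclude : fiber over v' is everything
  have hfv' : (S.filter (fun q => q.1 = v')).card = p := by
    rw [hfib1 v' hv'mem v hvmem, ← hf]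
    exact hpf
  set D := (d2 Γ u).filter (Γ.Adj v' ·) with hD
  have himg : ((S.filter (fun q => q.1 = v')).image (fun q => q.2)) = D := by
    apply Finset.eq_of_subset_of_card_le
    · intro y hy
      rw [Finset.mem_image] at hy
      obtain ⟨q, hq, hqy⟩ := hy
      rw [mem_filter] at hq
      obtain ⟨hqS, hq1⟩ := hq
      obtain ⟨h, hhu, hhv, hhw⟩ := (hmemS q).mp hqS
      rw [hD, mem_filter]
      refine ⟨?_, ?_⟩
      · rw [← hqy]
        exact (Finset.mem_product.mp (Finset.mem_filter.mp hqS).1).2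
      · show Γ.Adj v' y
        rw [← hqy, ← hq1, ← hhv, ← hhw]
        exact h.map_rel_iff.mpr hvw
    · rw [hD, nbv_card hg hreg huv']
      rw [Finset.card_image_of_injOn, hfv']
      intro q₁ h₁ q₂ h₂ heq
      rw [mem_coe, mem_filter] at h₁ h₂
      exact Prod.ext (h₁.2.trans h₂.2.symm) heq
  have hw'D : w' ∈ D := by
    rw [hD, mem_filter]
    exact ⟨hw'mem, hvw'⟩
  rw [← himg, Finset.mem_image] at hw'D
  obtain ⟨q, hq, hqy⟩ := hw'D
  rw [mem_filter] at hq
  obtain ⟨hqS, hq1⟩ := hq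
  obtain ⟨h, hhu, hhv, hhw⟩ := (hmemS q).mp hqS
  exact ⟨h, hhu, by rw [hhv, hq1], by rw [hhw, hqy]⟩

lemma exist_d2 (hp1 : 1 ≤ p) (hg : 4 ≤ Γ.egirth)
    (hreg : ∀ v, (Γ.neighborSet v).ncard = p + 1) (u : V) : ∃ w, Γ.dist u w = 2 := by
  have h1 : (nb Γ u).Nonempty := by rw [← card_pos, deg_eq hreg]; omega
  obtain ⟨v, hv⟩ := h1
  rw [mem_neighborFinset] at hv
  have h2 : ((nb Γ v).erase u).Nonempty := by
    rw [← card_pos, card_erase_of_mem (by rw [mem_neighborFinset]; exact hv.symm),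
      deg_eq hreg]
    omega
  obtain ⟨w, hw⟩ := h2
  rw [mem_erase, mem_neighborFinset] at hw
  exact ⟨w, dist_two hg hv hw.2 hw.1⟩

lemma d2_indep (hp2 : 2 ≤ p) (hg : 4 ≤ Γ.egirth)
    (hreg : ∀ v, (Γ.neighborSet v).ncard = p + 1)
    (hcp : ∀ a b : V, Γ.dist a b = 2 → ((nb Γ a) ∩ (nb Γ b)).card = p)
    {u a b : V} (ha : Γ.dist u a = 2) (hb : Γ.dist u b = 2) : ¬ Γ.Adj a b := by
  intro hadj
  set X := nb Γ u ∩ nb Γ a with hX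
  set Y := nb Γ u ∩ nb Γ b with hY
  have hXc : X.card = p := hcp u a ha
  have hYc : Y.card = p := hcp u b hb
  have hsub : X ∪ Y ⊆ nb Γ u := union_subset inter_subset_left inter_subset_left
  have hle : (X ∪ Y).card ≤ p + 1 := le_trans (card_le_card hsub) (le_of_eq (deg_eq hreg u))
  have h2 : (X ∪ Y).card + (X ∩ Y).card = X.card + Y.card := card_union_add_card_inter X Y
  have hne : (X ∩ Y).Nonempty := by rw [← card_pos]; omega
  obtain ⟨t, ht⟩ := hne
  simp only [mem_inter, hX, hY, mem_neighborFinset] at ht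
  exact notri' hg ht.1.2.symm hadj ht.2.2.symm

lemma outside (hp2 : 2 ≤ p) (hg : 4 ≤ Γ.egirth) (hconn : Γ.Connected)
    (hreg : ∀ v, (Γ.neighborSet v).ncard = p + 1)
    (hcp : ∀ a b : V, Γ.dist a b = 2 → ((nb Γ a) ∩ (nb Γ b)).card = p)
    {u w : V} (hd : Γ.dist u w = 2) :
    ∃ x, Γ.Adj w x ∧ Γ.dist u x = 3 ∧ ∀ y, Γ.Adj w y → Γ.dist u y = 3 → y = x := by
  set C := nb Γ w ∩ nb Γ u with hC
  have hCc : C.card = p := by rw [hC, inter_comm]; exact hcp u w hd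
  have hCsub : C ⊆ nb Γ w := inter_subset_left
  have hR : (nb Γ w \ C).card = 1 := by
    rw [card_sdiff_of_subset hCsub, deg_eq hreg, hCc]; omega
  obtain ⟨x, hx⟩ := card_eq_one.mp hR
  have hxmem : x ∈ nb Γ w \ C := by rw [hx]; exact mem_singleton_self x
  rw [mem_sdiff, mem_neighborFinset] at hxmem
  obtain ⟨hwx, hxC⟩ := hxmem
  have hxu : x ≠ u := by
    intro h
    rw [h] at hwx
    have : Γ.dist u w = 1 := SimpleGraph.dist_eq_one_iff_adj.mpr hwx.symm
    omega
  have hx3 : Γ.dist u x = 3 := by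
    have hle : Γ.dist u x ≤ 3 := by
      have h1 : Γ.dist u x ≤ Γ.dist u w + Γ.dist w x := hconn.dist_triangle
      have h2 : Γ.dist w x = 1 := SimpleGraph.dist_eq_one_iff_adj.mpr hwx
      omega
    have hne0 : Γ.dist u x ≠ 0 := by
      intro h0
      exact hxu (hconn.dist_eq_zero_iff.mp h0).symm
    have hne1 : Γ.dist u x ≠ 1 := by
      intro h1
      apply hxC
      rw [hC, mem_inter, mem_neighborFinset, mem_neighborFinset]
      exact ⟨hwx, SimpleGraph.dist_eq_one_iff_adj.mp h1⟩
    have hne2 : Γ.dist u x ≠ 2 := fun h2 => d2_indep hp2 hg hreg hcp hd h2 hwx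
    omega
  refine ⟨x, hwx, hx3, fun y hwy hy3 => ?_⟩
  have hymem : y ∈ nb Γ w \ C := by
    rw [mem_sdiff, mem_neighborFinset, hC, mem_inter, mem_neighborFinset,
      mem_neighborFinset]
    refine ⟨hwy, fun hmem => ?_⟩
    have : Γ.dist u y = 1 := SimpleGraph.dist_eq_one_iff_adj.mpr hmem.2
    omega
  rw [hx, mem_singleton] at hymem
  exact hymem

lemma d3_nbrs (hp2 : 2 ≤ p) (hg : 4 ≤ Γ.egirth) (hconn : Γ.Connected)
    (hreg : ∀ v, (Γ.neighborSet v).ncard = p + 1)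
    (hcp : ∀ a b : V, Γ.dist a b = 2 → ((nb Γ a) ∩ (nb Γ b)).card = p)
    {u y : V} (hy : Γ.dist u y = 3) :
    p ≤ ((d2 Γ u).filter (Γ.Adj y ·)).card := by
  obtain ⟨z, hzy, hz2⟩ := dist_pred hconn (by rw [hy] : Γ.dist u y = 2 + 1)
  have hCne : (nb Γ u ∩ nb Γ z).Nonempty := by
    rw [← card_pos, hcp u z hz2]; omega
  obtain ⟨v, hv⟩ := hCne
  rw [mem_inter, mem_neighborFinset, mem_neighborFinset] at hv
  have hyv : y ≠ v := by
    intro h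
    rw [h] at hy
    have : Γ.dist u v = 1 := SimpleGraph.dist_eq_one_iff_adj.mpr hv.1
    omega
  have hdvy : Γ.dist v y = 2 := dist_two hg hv.2.symm hzy hyv
  have hsub : nb Γ v ∩ nb Γ y ⊆ (d2 Γ u).filter (Γ.Adj y ·) := by
    intro t ht
    rw [mem_inter, mem_neighborFinset, mem_neighborFinset] at ht
    rw [mem_filter, mem_d2]
    have htu : t ≠ u := by
      intro h
      rw [h] at ht
      have : Γ.dist u y = 1 := SimpleGraph.dist_eq_one_iff_adj.mpr ht.2.symm
      omega
    exact ⟨dist_two hg hv.1 ht.1 htu, ht.2⟩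
  calc p = (nb Γ v ∩ nb Γ y).card := (hcp v y hdvy).symm
  _ ≤ _ := card_le_card hsub

lemma d2_card (hp1 : 1 ≤ p) (hg : 4 ≤ Γ.egirth)
    (hreg : ∀ v, (Γ.neighborSet v).ncard = p + 1)
    (hcp : ∀ a b : V, Γ.dist a b = 2 → ((nb Γ a) ∩ (nb Γ b)).card = p)
    (u : V) : (d2 Γ u).card = p + 1 := by
  have := edge_count hg hreg u (fun w hw => hcp u w (mem_d2.mp hw))
  have hppos : 0 < p := hp1
  exact Nat.eq_of_mul_eq_mul_right hppos this

lemma d3_unique (hp2 : 2 ≤ p) (hg : 4 ≤ Γ.egirth) (hconn : Γ.Connected)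
    (hreg : ∀ v, (Γ.neighborSet v).ncard = p + 1)
    (hcp : ∀ a b : V, Γ.dist a b = 2 → ((nb Γ a) ∩ (nb Γ b)).card = p)
    (u : V) : ∃ x, Γ.dist u x = 3 ∧ ∀ y, Γ.dist u y = 3 → y = x := by
  obtain ⟨w, hw⟩ := exist_d2 (by omega) hg hreg u
  obtain ⟨x, hwx, hx3, _⟩ := outside hp2 hg hconn hreg hcp hw
  refine ⟨x, hx3, fun y hy3 => ?_⟩
  -- uniqueness via double counting
  by_contra hne
  set D3 : Finset V := {x, y} with hD3
  have hD3c : D3.card = 2 := by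
    rw [hD3, card_insert_of_notMem (by simpa using fun h => hne h.symm), card_singleton]
  -- count edges between d2 and D3
  set Q : Finset (V × V) := ((d2 Γ u) ×ˢ D3).filter (fun q => Γ.Adj q.1 q.2) with hQ
  have hQ1 : Q.card ≤ (d2 Γ u).card := by
    rw [Finset.card_eq_sum_card_fiberwise (f := Prod.fst) (t := d2 Γ u)
      (fun q hq => (Finset.mem_product.mp (Finset.mem_filter.mp hq).1).1)]
    calc ∑ w₁ ∈ d2 Γ u, (Q.filter (fun q => q.1 = w₁)).card
        ≤ ∑ w₁ ∈ d2 Γ u, 1 := by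
          apply Finset.sum_le_sum
          intro w₁ hw₁
          apply Finset.card_le_one.mpr
          intro q₁ hq₁ q₂ hq₂
          rw [mem_filter] at hq₁ hq₂
          obtain ⟨hq₁Q, hq₁1⟩ := hq₁
          obtain ⟨hq₂Q, hq₂1⟩ := hq₂
          rw [hQ, mem_filter, Finset.mem_product] at hq₁Q hq₂Q
          obtain ⟨x₀, hx₀1, hx₀2, hx₀3⟩ := outside hp2 hg hconn hreg hcp
            (mem_d2.mp hq₁Q.1.1)
          have hd3 : ∀ z ∈ D3, Γ.dist u z = 3 := by
            intro z hz
            rw [hD3, mem_insert, mem_singleton] at hz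
            rcases hz with h | h <;> subst h <;> assumption
          have hq12 : q₂.1 = q₁.1 := hq₂1.trans hq₁1.symm
          have e₁ : q₁.2 = x₀ := hx₀3 q₁.2 hq₁Q.2 (hd3 _ hq₁Q.1.2)
          have e₂ : q₂.2 = x₀ := hx₀3 q₂.2 (by rw [← hq12]; exact hq₂Q.2) (hd3 _ hq₂Q.1.2)
          exact Prod.ext (hq₁1.trans hq₂1.symm) (e₁.trans e₂.symm)
    _ = (d2 Γ u).card := by rw [Finset.sum_const, smul_eq_mul, mul_one]
  have hQ2 : 2 * p ≤ Q.card := by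
    rw [Finset.card_eq_sum_card_fiberwise (f := Prod.snd) (t := D3)
      (fun q hq => (Finset.mem_product.mp (Finset.mem_filter.mp hq).1).2)]
    have hfib : ∀ z ∈ D3, p ≤ (Q.filter (fun q => q.2 = z)).card := by
      intro z hz
      have hz3 : Γ.dist u z = 3 := by
        rw [hD3, mem_insert, mem_singleton] at hz
        rcases hz with h | h <;> subst h <;> assumption
      calc p ≤ ((d2 Γ u).filter (Γ.Adj z ·)).card := d3_nbrs hp2 hg hconn hreg hcp hz3
      _ ≤ (Q.filter (fun q => q.2 = z)).card := by
          apply Finset.card_le_card_of_injOn (fun t => (t, z))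
          · intro t ht
            rw [mem_coe, mem_filter, mem_d2] at ht
            rw [mem_coe, mem_filter, hQ, mem_filter, Finset.mem_product, mem_d2]
            exact ⟨⟨⟨ht.1, hz⟩, ht.2.symm⟩, rfl⟩
          · intro t₁ _ t₂ _ h
            exact congrArg Prod.fst h
    calc 2 * p = ∑ _z ∈ D3, p := by rw [Finset.sum_const, smul_eq_mul, hD3c]
    _ ≤ _ := Finset.sum_le_sum hfib
  have hd2c : (d2 Γ u).card = p + 1 := d2_card (by omega) hg hreg hcp u
  omega

lemma no_dist4 (hp2 : 2 ≤ p) (hg : 4 ≤ Γ.egirth) (hconn : Γ.Connected)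
    (hreg : ∀ v, (Γ.neighborSet v).ncard = p + 1)
    (hcp : ∀ a b : V, Γ.dist a b = 2 → ((nb Γ a) ∩ (nb Γ b)).card = p)
    {u y : V} (hy : Γ.dist u y = 4) : False := by
  obtain ⟨z, hzy, hz3⟩ := dist_pred hconn (by rw [hy] : Γ.dist u y = 3 + 1)
  have hne : ((d2 Γ u).filter (Γ.Adj z ·)).Nonempty := by
    rw [← card_pos]
    have := d3_nbrs hp2 hg hconn hreg hcp hz3
    omega
  obtain ⟨w, hwmem⟩ := hne
  rw [mem_filter, mem_d2] at hwmem
  obtain ⟨hw2, hzw⟩ := hwmem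
  have hyw : y ≠ w := by intro h; rw [h] at hy; omega
  have hdyw : Γ.dist w y = 2 := dist_two hg hzw.symm hzy hyw
  have hcard : (nb Γ w ∩ nb Γ y).card = p := hcp w y hdyw
  obtain ⟨x₀, hx3, hx₀u⟩ := d3_unique hp2 hg hconn hreg hcp u
  have hsub : nb Γ w ∩ nb Γ y ⊆ {x₀} := by
    intro t ht
    rw [mem_inter, mem_neighborFinset, mem_neighborFinset] at ht
    rw [mem_singleton]
    apply hx₀u
    have h1 : Γ.dist u t ≤ 3 := by
      have := hconn.dist_triangle (u := u) (v := w) (w := t)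
      have h2 : Γ.dist w t = 1 := SimpleGraph.dist_eq_one_iff_adj.mpr ht.1
      omega
    have h2 : 3 ≤ Γ.dist u t := by
      have := hconn.dist_triangle (u := u) (v := t) (w := y)
      have h3 : Γ.dist t y = 1 := SimpleGraph.dist_eq_one_iff_adj.mpr ht.2.symm
      omega
    omega
  have := card_le_card hsub
  rw [card_singleton] at this
  omega

lemma dist_le3 (hp2 : 2 ≤ p) (hg : 4 ≤ Γ.egirth) (hconn : Γ.Connected)
    (hreg : ∀ v, (Γ.neighborSet v).ncard = p + 1)
    (hcp : ∀ a b : V, Γ.dist a b = 2 → ((nb Γ a) ∩ (nb Γ b)).card = p)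
    (u y : V) : Γ.dist u y ≤ 3 := by
  by_contra h
  push_neg at h
  -- find a vertex at distance exactly 4
  have key : ∀ k : ℕ, ∀ z : V, Γ.dist u z = k + 4 → False := by
    intro k
    induction k with
    | zero => intro z hz; exact no_dist4 hp2 hg hconn hreg hcp hz
    | succ n ih =>
      intro z hz
      obtain ⟨z', _, hz'⟩ := dist_pred hconn (by rw [hz] : Γ.dist u z = (n + 4) + 1)
      exact ih z' hz'
  exact key (Γ.dist u y - 4) y (by omega)

lemma adj_flip (hp2 : 2 ≤ p) (hg : 4 ≤ Γ.egirth) (hconn : Γ.Connected)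
    (hreg : ∀ v, (Γ.neighborSet v).ncard = p + 1)
    (hcp : ∀ a b : V, Γ.dist a b = 2 → ((nb Γ a) ∩ (nb Γ b)).card = p)
    (o : V) {s t : V} (hst : Γ.Adj s t) : Γ.dist o s % 2 ≠ Γ.dist o t % 2 := by
  have h1 : Γ.dist o t ≤ Γ.dist o s + 1 := by
    have := hconn.dist_triangle (u := o) (v := s) (w := t)
    have h2 : Γ.dist s t = 1 := SimpleGraph.dist_eq_one_iff_adj.mpr hst
    omega
  have h2 : Γ.dist o s ≤ Γ.dist o t + 1 := by
    have := hconn.dist_triangle (u := o) (v := t) (w := s)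
    have h3 : Γ.dist t s = 1 := SimpleGraph.dist_eq_one_iff_adj.mpr hst.symm
    omega
  have hle : Γ.dist o s ≤ 3 := dist_le3 hp2 hg hconn hreg hcp o s
  have hne : Γ.dist o s ≠ Γ.dist o t := by
    intro heq
    have hst' : s ≠ t := hst.ne
    have h0 : Γ.dist o s = 0 ∨ Γ.dist o s = 1 ∨ Γ.dist o s = 2 ∨ Γ.dist o s = 3 := by
      omega
    rcases h0 with h | h | h | h
    · exact hst' ((hconn.dist_eq_zero_iff.mp h).symm.trans
        (hconn.dist_eq_zero_iff.mp (by omega)))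
    · exact notri' hg (SimpleGraph.dist_eq_one_iff_adj.mp h)
        hst (SimpleGraph.dist_eq_one_iff_adj.mp (by omega))
    · exact d2_indep hp2 hg hreg hcp h (by omega) hst
    · obtain ⟨x₀, _, hx₀u⟩ := d3_unique hp2 hg hconn hreg hcp o
      exact hst' ((hx₀u s h).trans (hx₀u t (by omega)).symm)
  omega

lemma walk_parity (hp2 : 2 ≤ p) (hg : 4 ≤ Γ.egirth) (hconn : Γ.Connected)
    (hreg : ∀ v, (Γ.neighborSet v).ncard = p + 1)
    (hcp : ∀ a b : V, Γ.dist a b = 2 → ((nb Γ a) ∩ (nb Γ b)).card = p)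
    (o : V) {s t : V} (W : Γ.Walk s t) :
    (Γ.dist o s + W.length) % 2 = Γ.dist o t % 2 := by
  induction W with
  | nil => simp
  | cons h W' ih =>
    rename_i a b c
    rw [SimpleGraph.Walk.length_cons]
    have hf := adj_flip hp2 hg hconn hreg hcp o h
    have h1 : Γ.dist o a ≤ 3 := dist_le3 hp2 hg hconn hreg hcp o a
    have h2 : Γ.dist o b ≤ 3 := dist_le3 hp2 hg hconn hreg hcp o b
    omega

lemma parity_dist (hp2 : 2 ≤ p) (hg : 4 ≤ Γ.egirth) (hconn : Γ.Connected)
    (hreg : ∀ v, (Γ.neighborSet v).ncard = p + 1)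
    (hcp : ∀ a b : V, Γ.dist a b = 2 → ((nb Γ a) ∩ (nb Γ b)).card = p)
    (o : V) (s t : V) :
    (Γ.dist o s % 2 = Γ.dist o t % 2) ↔ Γ.dist s t % 2 = 0 := by
  obtain ⟨W, hW⟩ := (hconn s t).exists_walk_length_eq_dist
  have := walk_parity hp2 hg hconn hreg hcp o W
  rw [hW] at this
  omega

lemma adj_char (hp2 : 2 ≤ p) (hg : 4 ≤ Γ.egirth) (hconn : Γ.Connected)
    (hreg : ∀ v, (Γ.neighborSet v).ncard = p + 1)
    (hcp : ∀ a b : V, Γ.dist a b = 2 → ((nb Γ a) ∩ (nb Γ b)).card = p)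
    (o : V) (s t : V) :
    Γ.Adj s t ↔ (Γ.dist o s % 2 ≠ Γ.dist o t % 2 ∧ Γ.dist s t ≠ 3) := by
  constructor
  · intro hst
    refine ⟨adj_flip hp2 hg hconn hreg hcp o hst, ?_⟩
    rw [SimpleGraph.dist_eq_one_iff_adj.mpr hst]
    omega
  · rintro ⟨hpar, hne3⟩
    have hodd : Γ.dist s t % 2 = 1 := by
      have := parity_dist hp2 hg hconn hreg hcp o s t
      omega
    have hle : Γ.dist s t ≤ 3 := dist_le3 hp2 hg hconn hreg hcp s t
    have : Γ.dist s t = 1 := by omega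
    exact SimpleGraph.dist_eq_one_iff_adj.mp this

lemma caseB (hp2 : 2 ≤ p) (hg : 4 ≤ Γ.egirth) (hconn : Γ.Connected)
    (hreg : ∀ v, (Γ.neighborSet v).ncard = p + 1)
    (hcp : ∀ a b : V, Γ.dist a b = 2 → ((nb Γ a) ∩ (nb Γ b)).card = p)
    {u v w u' v' w' : V} (huv : Γ.Adj u v) (hvw : Γ.Adj v w) (hwu : u ≠ w)
    (huv' : Γ.Adj u' v') (hvw' : Γ.Adj v' w') (hwu' : u' ≠ w') :
    ∃ g : Γ ≃g Γ, g u = u' ∧ g v = v' ∧ g w = w' := by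
  classical
  have h4 : ∀ a : V, ∃ x, Γ.dist a x = 3 ∧ ∀ y, Γ.dist a y = 3 → y = x :=
    d3_unique hp2 hg hconn hreg hcp
  choose σ hσ1 hσ2 using h4
  have hσinv : ∀ a, σ (σ a) = a := fun a =>
    (hσ2 (σ a) a (by rw [SimpleGraph.dist_comm]; exact hσ1 a)).symm
  have hσne : ∀ {a b : V}, Γ.Adj a b → σ a ≠ b := by
    intro a b hab h
    have h3 := hσ1 a
    rw [h] at h3
    have h1 : Γ.dist a b = 1 := SimpleGraph.dist_eq_one_iff_adj.mpr hab
    omega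
  set sd : V → ℕ := fun y => Γ.dist u y % 2 with hsd
  have hsdlt : ∀ y, sd y < 2 := fun y => Nat.mod_lt _ (by omega)
  have hflip : ∀ {s t : V}, Γ.Adj s t → sd s ≠ sd t := fun {s t} hst =>
    adj_flip hp2 hg hconn hreg hcp u hst
  have hσflip : ∀ a, sd (σ a) ≠ sd a := by
    intro a heq
    have h3 := hσ1 a
    have := (parity_dist hp2 hg hconn hreg hcp u a (σ a)).mp (by
      show Γ.dist u a % 2 = Γ.dist u (σ a) % 2
      exact heq.symm)
    omega
  have hchar : ∀ s t : V, Γ.Adj s t ↔ (sd s ≠ sd t ∧ t ≠ σ s) := by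
    intro s t
    rw [adj_char hp2 hg hconn hreg hcp u s t]
    exact and_congr_right fun _ =>
      ⟨fun h3 ht => h3 (ht ▸ hσ1 s), fun hne h3 => hne (hσ2 s t h3)⟩
  -- side facts
  have hsw : sd w = sd u := by
    have h1 := hflip huv
    have h2 := hflip hvw
    have := hsdlt u; have := hsdlt v; have := hsdlt w
    omega
  have hsv : sd v ≠ sd u := fun h => hflip huv h.symm
  have hsw' : sd w' = sd u' := by
    have h1 := hflip huv'
    have h2 := hflip hvw'
    have := hsdlt u'; have := hsdlt v'; have := hsdlt w'
    omega
  have hsv' : sd v' ≠ sd u' := fun h => hflip huv' h.symm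
  have hσvu : σ v ≠ u := hσne huv.symm
  have hσvw : σ v ≠ w := hσne hvw
  have hσvu' : σ v' ≠ u' := hσne huv'.symm
  have hσvw' : σ v' ≠ w' := hσne hvw'
  have hsσv : sd (σ v) = sd u := by
    have := hσflip v; have := hsdlt (σ v); have := hsdlt v; have := hsdlt u
    omega
  have hsσv' : sd (σ v') = sd u' := by
    have := hσflip v'; have := hsdlt (σ v'); have := hsdlt v'; have := hsdlt u'
    omega
  -- the two sides
  set P : Finset V := univ.filter (fun y => sd y = sd u) with hP
  set P' : Finset V := univ.filter (fun y => sd y = sd u') with hP'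
  have hmemP : ∀ y, y ∈ P ↔ sd y = sd u := by intro y; simp [hP]
  have hmemP' : ∀ y, y ∈ P' ↔ sd y = sd u' := by intro y; simp [hP']
  have hPP' : P.card = P'.card := by
    by_cases hss : sd u = sd u'
    · congr 1
      ext y
      rw [hmemP, hmemP', hss]
    · refine Finset.card_bij' (fun y _ => σ y) (fun y _ => σ y) ?_ ?_ ?_ ?_
      · intro y hy
        rw [hmemP] at hy
        rw [hmemP']
        show sd (σ y) = sd u'
        have := hσflip y; have := hsdlt (σ y); have := hsdlt y
        have := hsdlt u; have := hsdlt u'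
        omega
      · intro y hy
        rw [hmemP'] at hy
        rw [hmemP]
        show sd (σ y) = sd u
        have := hσflip y; have := hsdlt (σ y); have := hsdlt y
        have := hsdlt u; have := hsdlt u'
        omega
      · intro y _; exact hσinv y
      · intro y _; exact hσinv y
  -- triples
  set T : Finset V := {u, w, σ v} with hT
  set T' : Finset V := {u', w', σ v'} with hT'
  have hTsub : T ⊆ P := by
    intro y hy
    rw [hT, mem_insert, mem_insert, mem_singleton] at hy
    rw [hmemP]
    rcases hy with h | h | h <;> subst h
    · rfl
    · exact hsw
    · exact hsσv
  have hT'sub : T' ⊆ P' := by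
    intro y hy
    rw [hT', mem_insert, mem_insert, mem_singleton] at hy
    rw [hmemP']
    rcases hy with h | h | h <;> subst h
    · rfl
    · exact hsw'
    · exact hsσv'
  have hTc : T.card = 3 := by
    rw [hT, card_insert_of_notMem (by simp [hwu, Ne.symm hσvu]),
      card_insert_of_notMem (by simp [Ne.symm hσvw]), card_singleton]
  have hT'c : T'.card = 3 := by
    rw [hT', card_insert_of_notMem (by simp [hwu', Ne.symm hσvu']),
      card_insert_of_notMem (by simp [Ne.symm hσvw']), card_singleton]
  set E : Finset V := P \ T with hE
  set E' : Finset V := P' \ T' with hE'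
  have hEc : E.card = E'.card := by
    rw [hE, hE', card_sdiff_of_subset hTsub, card_sdiff_of_subset hT'sub, hTc, hT'c, hPP']
  have hEfc : Fintype.card ↥E = Fintype.card ↥E' := by
    rw [Fintype.card_coe, Fintype.card_coe, hEc]
  set e₀ : ↥E ≃ ↥E' := Fintype.equivOfCardEq hEfc with he₀
  -- the map on side P
  set tf : V → V := fun y =>
    if y = u then u' else if y = w then w' else if y = σ v then σ v'
    else if h : y ∈ E then (e₀ ⟨y, h⟩ : V) else y with htf
  have htfu : tf u = u' := by rw [htf]; simp
  have htfw : tf w = w' := by rw [htf]; simp [Ne.symm hwu]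
  have htfσv : tf (σ v) = σ v' := by rw [htf]; simp [hσvu, hσvw]
  have htfE : ∀ y (h : y ∈ E), tf y = (e₀ ⟨y, h⟩ : V) := by
    intro y h
    have hy : y ∉ T := (mem_sdiff.mp h).2
    rw [hT, mem_insert, mem_insert, mem_singleton] at hy
    push_neg at hy
    rw [htf]
    simp only [hy.1, hy.2.1, hy.2.2, if_false, dif_pos h]
  have hE'val : ∀ z : ↥E', (z : V) ∈ P' ∧ (z : V) ≠ u' ∧ (z : V) ≠ w' ∧ (z : V) ≠ σ v' := by
    intro z
    have hz := mem_sdiff.mp (show (z : V) ∈ P' \ T' from z.2)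
    obtain ⟨hz1, hz2⟩ := hz
    rw [hT', mem_insert, mem_insert, mem_singleton] at hz2
    push_neg at hz2
    exact ⟨hz1, hz2⟩
  have hsplit : ∀ y ∈ P, y = u ∨ y = w ∨ y = σ v ∨ y ∈ E := by
    intro y hy
    by_cases h1 : y = u; · exact Or.inl h1
    by_cases h2 : y = w; · exact Or.inr (Or.inl h2)
    by_cases h3 : y = σ v; · exact Or.inr (Or.inr (Or.inl h3))
    refine Or.inr (Or.inr (Or.inr ?_))
    rw [hE, mem_sdiff, hT, mem_insert, mem_insert, mem_singleton]
    exact ⟨hy, by push_neg; exact ⟨h1, h2, h3⟩⟩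
  have htfP : ∀ y ∈ P, tf y ∈ P' := by
    intro y hy
    rcases hsplit y hy with h | h | h | h
    · subst h; rw [htfu]; exact hT'sub (by rw [hT']; simp)
    · subst h; rw [htfw]; exact hT'sub (by rw [hT']; simp)
    · rw [h, htfσv]; exact hT'sub (by rw [hT']; simp)
    · rw [htfE y h]; exact (hE'val (e₀ ⟨y, h⟩)).1
  have htfinj : ∀ y₁ ∈ P, ∀ y₂ ∈ P, tf y₁ = tf y₂ → y₁ = y₂ := by
    have hvals : u' ≠ w' ∧ u' ≠ σ v' ∧ w' ≠ σ v' := ⟨hwu', Ne.symm hσvu', Ne.symm hσvw'⟩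
    intro y₁ hy₁ y₂ hy₂ heq
    rcases hsplit y₁ hy₁ with h1 | h1 | h1 | h1 <;>
      rcases hsplit y₂ hy₂ with h2 | h2 | h2 | h2
    · rw [h1, h2]
    · rw [h1, htfu, h2, htfw] at heq; exact absurd heq hvals.1
    · rw [h1, htfu, h2, htfσv] at heq; exact absurd heq hvals.2.1
    · rw [h1, htfu, htfE y₂ h2] at heq; exact absurd heq.symm (hE'val _).2.1
    · rw [h1, htfw, h2, htfu] at heq; exact absurd heq.symm hvals.1
    · rw [h1, h2]
    · rw [h1, htfw, h2, htfσv] at heq; exact absurd heq hvals.2.2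
    · rw [h1, htfw, htfE y₂ h2] at heq; exact absurd heq.symm (hE'val _).2.2.1
    · rw [h1, htfσv, h2, htfu] at heq; exact absurd heq.symm hvals.2.1
    · rw [h1, htfσv, h2, htfw] at heq; exact absurd heq.symm hvals.2.2
    · rw [h1, h2]
    · rw [h1, htfσv, htfE y₂ h2] at heq; exact absurd heq.symm (hE'val _).2.2.2
    · rw [htfE y₁ h1, h2, htfu] at heq; exact absurd heq (hE'val _).2.1
    · rw [htfE y₁ h1, h2, htfw] at heq; exact absurd heq (hE'val _).2.2.1
    · rw [htfE y₁ h1, h2, htfσv] at heq; exact absurd heq (hE'val _).2.2.2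
    · rw [htfE y₁ h1, htfE y₂ h2] at heq
      have := e₀.injective (Subtype.ext heq)
      exact congrArg Subtype.val this
  -- the global map
  set τ : V → V := fun y => if y ∈ P then tf y else σ (tf (σ y)) with hτ
  have hinP : ∀ y, y ∈ P → σ y ∉ P := by
    intro y hy hc
    rw [hmemP] at hy hc
    exact hσflip y (hc.trans hy.symm)
  have hnotP : ∀ y, y ∉ P → σ y ∈ P := by
    intro y hy
    rw [hmemP] at hy ⊢
    have := hσflip y; have := hsdlt (σ y); have := hsdlt y; have := hsdlt u
    omega
  have hτin : ∀ y ∈ P, τ y = tf y := by intro y hy; rw [hτ]; simp [hy]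
  have hτout : ∀ y, y ∉ P → τ y = σ (tf (σ y)) := by intro y hy; rw [hτ]; simp [hy]
  have hτP' : ∀ y, τ y ∈ P' ↔ y ∈ P := by
    intro y
    by_cases hy : y ∈ P
    · rw [hτin y hy]
      exact iff_of_true (htfP y hy) hy
    · rw [hτout y hy]
      refine iff_of_false ?_ hy
      intro hc
      have h1 : tf (σ y) ∈ P' := htfP _ (hnotP y hy)
      rw [hmemP'] at hc h1
      exact hσflip (tf (σ y)) (hc.trans h1.symm)
  have hcomm : ∀ y, τ (σ y) = σ (τ y) := by
    intro y
    by_cases hy : y ∈ P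
    · rw [hτin y hy, hτout (σ y) (hinP y hy), hσinv]
    · rw [hτout y hy, hτin (σ y) (hnotP y hy), hσinv]
  have hτinj : Function.Injective τ := by
    intro y₁ y₂ heq
    by_cases h1 : y₁ ∈ P <;> by_cases h2 : y₂ ∈ P
    · rw [hτin y₁ h1, hτin y₂ h2] at heq
      exact htfinj y₁ h1 y₂ h2 heq
    · exfalso
      have e1 : τ y₁ ∈ P' := (hτP' y₁).mpr h1
      have e2 : τ y₂ ∈ P' := heq ▸ e1
      exact h2 ((hτP' y₂).mp e2)
    · exfalso
      have e2 : τ y₂ ∈ P' := (hτP' y₂).mpr h2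
      have e1 : τ y₁ ∈ P' := heq ▸ e2
      exact h1 ((hτP' y₁).mp e1)
    · rw [hτout y₁ h1, hτout y₂ h2] at heq
      have h3 : tf (σ y₁) = tf (σ y₂) := by
        have := congrArg σ heq
        rwa [hσinv, hσinv] at this
      have := htfinj _ (hnotP y₁ h1) _ (hnotP y₂ h2) h3
      have := congrArg σ this
      rwa [hσinv, hσinv] at this
  have hbij : Function.Bijective τ := Finite.injective_iff_bijective.mp hτinj
  have hmapadj : ∀ a b : V, Γ.Adj (τ a) (τ b) ↔ Γ.Adj a b := by
    intro a b
    rw [hchar (τ a) (τ b), hchar a b]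
    have hc1 : sd (τ a) ≠ sd (τ b) ↔ sd a ≠ sd b := by
      have ha := hτP' a
      have hb := hτP' b
      rw [hmemP', hmemP] at ha
      rw [hmemP', hmemP] at hb
      have := hsdlt (τ a); have := hsdlt (τ b); have := hsdlt a; have := hsdlt b
      have := hsdlt u; have := hsdlt u'
      omega
    have hc2 : (τ b ≠ σ (τ a)) ↔ b ≠ σ a := by
      rw [← hcomm a]
      exact not_congr ⟨fun h => hτinj h, fun h => h ▸ rfl⟩
    rw [hc1, hc2]
  refine ⟨⟨Equiv.ofBijective τ hbij, ?_⟩, ?_, ?_, ?_⟩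
  · intro a b
    exact hmapadj a b
  · show τ u = u'
    rw [hτin u (by rw [hmemP]), htfu]
  · show τ v = v'
    have hv : v ∉ P := by rw [hmemP]; exact hsv
    rw [hτout v hv, htfσv, hσinv]
  · show τ w = w'
    rw [hτin w (by rw [hmemP]; exact hsw), htfw]

end Stmt10Aux
end Stmt10Aux

open Stmt10Aux Finset SimpleGraph in
/-- A connected 2-distance-transitive graph of valency `p + 1`, `p` prime,
with girth at least `4` is 2-arc-transitive. -/
theorem stmt10 {V : Type*} [Fintype V] (Γ : SimpleGraph V) (p : ℕ) (hp : p.Prime)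
    (hconn : Γ.Connected)
    (hreg : ∀ v, (Γ.neighborSet v).ncard = p + 1)
    (h2dt : TwoDistanceTransitive Γ)
    (hgirth : 4 ≤ Γ.egirth) :
    TwoArcTransitive Γ := by
  classical
  haveI : DecidableEq V := Classical.decEq V
  haveI : DecidableRel Γ.Adj := fun a b => Classical.propDecidable _
  have hp2 : 2 ≤ p := hp.two_le
  obtain ⟨u₀⟩ := hconn.nonempty
  obtain ⟨w₀, hw₀⟩ := exist_d2 (by omega) hgirth hreg u₀
  set c2 := ((nb Γ u₀) ∩ (nb Γ w₀)).card with hc2def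
  have hc2 : ∀ a b : V, Γ.dist a b = 2 → ((nb Γ a) ∩ (nb Γ b)).card = c2 :=
    fun a b hab => common_const h2dt hab hw₀
  refine ⟨h2dt.1, ?_⟩
  intro u v w u' v' w' huv hvw hne huv' hv'w' hne'
  by_cases hdvd : p ∣ c2
  · -- structural case : c2 = p
    have hc2pos : 1 ≤ c2 := by
      obtain ⟨m, hm1, hm2⟩ := dist_two_mid hconn hw₀
      refine Finset.card_pos.mpr ⟨m, ?_⟩
      rw [mem_inter, mem_neighborFinset, mem_neighborFinset]
      exact ⟨hm1, hm2.symm⟩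
    have hc2le : c2 ≤ p + 1 := by
      calc c2 ≤ (nb Γ u₀).card := card_le_card inter_subset_left
      _ = p + 1 := deg_eq hreg u₀
    have hc2p : c2 = p := by
      obtain ⟨k, hk⟩ := hdvd
      rcases Nat.lt_or_ge k 2 with h | h
      · interval_cases k <;> omega
      · exfalso; nlinarith
    have hcp : ∀ a b : V, Γ.dist a b = 2 → ((nb Γ a) ∩ (nb Γ b)).card = p := by
      intro a b hab
      rw [hc2 a b hab, hc2p]
    exact caseB hp2 hgirth hconn hreg hcp huv hvw hne huv' hv'w' hne'
  · -- coprime case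
    obtain ⟨g1, hg1⟩ := h2dt.1 u' u
    have h1 : Γ.Adj u (g1 v') := by rw [← hg1]; exact g1.map_rel_iff.mpr huv'
    have h2 : Γ.Adj (g1 v') (g1 w') := g1.map_rel_iff.mpr hv'w'
    have h3 : g1 w' ≠ u := by
      intro h
      rw [← hg1] at h
      exact hne' (g1.injective h).symm
    obtain ⟨h, hhu, hhv, hhw⟩ :=
      caseA hp hgirth hreg h2dt hc2 hdvd huv hvw (Ne.symm hne) h1 h2 h3
    have hg1s : g1.symm u = u' := by rw [← hg1, RelIso.symm_apply_apply]
    refine ⟨h.trans g1.symm, ?_, ?_, ?_⟩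
    · show g1.symm (h u) = u'
      rw [hhu, hg1s]
    · show g1.symm (h v) = v'
      rw [hhv, RelIso.symm_apply_apply]
    · show g1.symm (h w) = w'
      rw [hhw, RelIso.symm_apply_apply]
end

section
/- Let Γ be a connected 2-distance-transitive graph of valency k ≥ 3 with intersection number b₁ = 1. Then k is even and Γ is isomorphic to the complete multipartite graph K_{(k+2)/2 [2]} (with (k+2)/2 parts of size 2). -/
open SimpleGraph
universe u

lemma pairing_equiv {V : Type u} [Fintype V] (P : V → V)
    (hPP : ∀ a, P (P a) = a) (hPne : ∀ a, P a ≠ a) :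
    ∃ (Q : Type u) (_ : Fintype Q) (e : V ≃ Q × Fin 2),
      ∀ a b : V, ((e a).1 = (e b).1 ↔ (b = a ∨ b = P a)) := by
  classical
  let s : Setoid V := ⟨fun a b => b = a ∨ b = P a, by
    constructor
    · intro a; exact Or.inl rfl
    · rintro a b (rfl | rfl)
      · exact Or.inl rfl
      · exact Or.inr (by rw [hPP])
    · rintro a b c (rfl | rfl) (rfl | rfl)
      · exact Or.inl rfl
      · exact Or.inr rfl
      · exact Or.inr rfl
      · exact Or.inl (hPP a)⟩
  haveI : Fintype (Quotient s) := Fintype.ofFinite _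
  set idx : V → ℕ := fun a => (Fintype.equivFin V a : ℕ) with hidx
  have idx_inj : ∀ a b : V, idx a = idx b → a = b := by
    intro a b h
    exact (Fintype.equivFin V).injective (Fin.ext h)
  set bit : V → Fin 2 := fun a => if idx a < idx (P a) then 0 else 1 with hbit
  have bit_ne : ∀ a : V, bit a ≠ bit (P a) := by
    intro a
    have h1 : idx a ≠ idx (P a) := fun h => hPne a (idx_inj _ _ h.symm)
    simp only [hbit, hPP]
    rcases lt_or_gt_of_ne h1 with h | h
    · rw [if_pos h, if_neg (by omega)]; decide
    · rw [if_neg (by omega), if_pos (by omega)]; decide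
  set F : V → Quotient s × Fin 2 := fun a => (Quotient.mk s a, bit a) with hF
  have hmk : ∀ a b : V, (Quotient.mk s a = Quotient.mk s b) ↔ (b = a ∨ b = P a) :=
    fun a b => Quotient.eq (r := s)
  have hFbij : Function.Bijective F := by
    constructor
    · intro a b hab
      have h1 : Quotient.mk s a = Quotient.mk s b := congrArg Prod.fst hab
      have h2 : bit a = bit b := congrArg Prod.snd hab
      rcases (hmk a b).mp h1 with rfl | rfl
      · rfl
      · exact absurd h2 (bit_ne a)
    · rintro ⟨q, i⟩
      obtain ⟨a, rfl⟩ := q.exists_rep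
      by_cases h : bit a = i
      · exact ⟨a, by simp [hF, h]⟩
      · refine ⟨P a, ?_⟩
        have h1 : Quotient.mk s (P a) = Quotient.mk s a :=
          (hmk _ _).mpr (Or.inr (hPP a).symm)
        have h2 : bit (P a) = i := by
          have := bit_ne a
          have h3 : ∀ x y z : Fin 2, x ≠ y → y ≠ z → x ≠ z → False := by decide
          by_contra hne
          exact h3 _ _ _ (Ne.symm this) h hne
        simp [hF, h1, h2]
  let e : V ≃ Quotient s × Fin 2 := Equiv.ofBijective F hFbij
  refine ⟨Quotient s, inferInstance, e, fun a b => ?_⟩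
  show (F a).1 = (F b).1 ↔ _
  exact hmk a b

lemma matching_iso {V : Type u} [Fintype V] (Γ : SimpleGraph V) (k : ℕ) (P : V → V)
    (hPP : ∀ a, P (P a) = a) (hPne : ∀ a, P a ≠ a)
    (hadj : ∀ a b, Γ.Adj a b ↔ (b ≠ a ∧ b ≠ P a))
    (hcard : Fintype.card V = k + 2) :
    Even k ∧
    Nonempty (Γ ≃g SimpleGraph.completeMultipartiteGraph (fun _ : Fin ((k + 2) / 2) => Fin 2)) := by
  classical
  obtain ⟨Q, hQ, e, he⟩ := pairing_equiv P hPP hPne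
  haveI := hQ
  have hcV : Fintype.card V = Fintype.card Q * 2 := by
    rw [Fintype.card_congr e, Fintype.card_prod, Fintype.card_fin]
  have hEven : Even k := by rw [Nat.even_iff]; omega
  have hm : Fintype.card Q = (k + 2) / 2 := by omega
  let eQ : Q ≃ Fin ((k + 2) / 2) := (Fintype.equivFin Q).trans (finCongr hm)
  let e2 : V ≃ Σ _ : Fin ((k + 2) / 2), Fin 2 :=
    e.trans ((eQ.prodCongr (Equiv.refl (Fin 2))).trans
      (Equiv.sigmaEquivProd (Fin ((k + 2) / 2)) (Fin 2)).symm)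
  refine ⟨hEven, ⟨⟨e2, ?_⟩⟩⟩
  intro a b
  have h1 : (e2 a).1 = eQ (e a).1 := rfl
  have h2 : (e2 b).1 = eQ (e b).1 := rfl
  simp only [comap_adj, top_adj]
  rw [h1, h2, ne_eq, EmbeddingLike.apply_eq_iff_eq, he a b, hadj a b]
  push_neg
  exact Iff.rfl

theorem stmt11' {V : Type u} [Fintype V] (Γ : SimpleGraph V) (k : ℕ) (hk : 3 ≤ k)
    (hconn : Γ.Connected)
    (hreg : ∀ v, (Γ.neighborSet v).ncard = k)
    (hb₁ : ∀ u v, Γ.Adj u v → {w | Γ.Adj v w ∧ Γ.dist u w = 2}.ncard = 1) :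
    Even k ∧
    Nonempty (Γ ≃g SimpleGraph.completeMultipartiteGraph (fun _ : Fin ((k + 2) / 2) => Fin 2)) := by
  classical
  have hne : Nonempty V := hconn.nonempty
  -- distance-2 facts
  have hd2 : ∀ u x : V, Γ.dist u x = 2 → ¬ Γ.Adj u x ∧ x ≠ u := by
    intro u x h
    constructor
    · intro ha
      rw [← SimpleGraph.dist_eq_one_iff_adj] at ha
      omega
    · rintro rfl
      rw [SimpleGraph.dist_self] at h
      omega
  have H2 : ∀ u v x : V, Γ.Adj u v → Γ.Adj v x → ¬ Γ.Adj u x → x ≠ u → Γ.dist u x = 2 := by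
    intro u v x huv hvx hux hxu
    have hle : Γ.dist u x ≤ 2 := by
      have := Γ.dist_le (SimpleGraph.Walk.cons huv (SimpleGraph.Walk.cons hvx SimpleGraph.Walk.nil))
      simpa using this
    have h0 : Γ.dist u x ≠ 0 := fun h => hxu ((hconn.dist_eq_zero_iff).mp h).symm
    have h1 : Γ.dist u x ≠ 1 := fun h => hux (SimpleGraph.dist_eq_one_iff_adj.mp h)
    omega
  have H3 : ∀ u x : V, Γ.dist u x = 2 → ∃ v, Γ.Adj u v ∧ Γ.Adj v x := by
    intro u x h
    obtain ⟨p, hp⟩ := (hconn u x).exists_walk_length_eq_dist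
    rw [h] at hp
    refine ⟨p.getVert 1, ?_, ?_⟩
    · have := p.adj_getVert_succ (i := 0) (by omega)
      simpa using this
    · have h2 := p.adj_getVert_succ (i := 1) (by omega)
      have h3 : p.getVert 2 = x := by
        have := p.getVert_length
        rwa [hp] at this
      rwa [h3] at h2
  -- uniqueness function from b₁ = 1
  have H1 : ∀ u v, Γ.Adj u v → ∃ w, (Γ.Adj v w ∧ Γ.dist u w = 2) ∧
      ∀ x, Γ.Adj v x → Γ.dist u x = 2 → x = w := by
    intro u v h
    obtain ⟨w, hw⟩ := Set.ncard_eq_one.mp (hb₁ u v h)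
    have hwmem : w ∈ {x | Γ.Adj v x ∧ Γ.dist u x = 2} := by
      rw [hw]; exact Set.mem_singleton w
    refine ⟨w, hwmem, ?_⟩
    intro x h1 h2
    have : x ∈ {x | Γ.Adj v x ∧ Γ.dist u x = 2} := ⟨h1, h2⟩
    rwa [hw, Set.mem_singleton_iff] at this
  choose! f hf1 hf2 using H1
  have hfadj : ∀ u v, Γ.Adj u v → Γ.Adj v (f u v) := fun u v h => (hf1 u v h).1
  have hfd : ∀ u v, Γ.Adj u v → Γ.dist u (f u v) = 2 := fun u v h => (hf1 u v h).2
  have HC : ∀ u v, Γ.Adj u v → ∀ x, Γ.Adj v x → x ≠ u → x ≠ f u v → Γ.Adj u x := by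
    intro u v h x hvx hxu hxw
    by_contra hux
    exact hxw (hf2 u v h x hvx (H2 u v x h hvx hux hxu))
  -- cardinality of punctured neighborhoods
  have Hdiff : ∀ u v, Γ.Adj u v → (Γ.neighborSet v \ {u, f u v}).ncard = k - 2 := by
    intro u v h
    have hsub : ({u, f u v} : Set V) ⊆ Γ.neighborSet v := by
      rintro x (rfl | rfl)
      · exact h.symm
      · exact hfadj u v h
    have hne' : u ≠ f u v := fun h' => (hd2 u (f u v) (hfd u v h)).2 h'.symm
    rw [Set.ncard_diff hsub, Set.ncard_pair hne', hreg]
  -- S ⊆ N(w)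
  have HS : ∀ u v, Γ.Adj u v → ∀ s, Γ.Adj v s → s ≠ u → s ≠ f u v → Γ.Adj s (f u v) := by
    intro u v h s hs hsu hsw
    set w := f u v with hwdef
    have hvw : Γ.Adj v w := hfadj u v h
    have hnadj : ¬ Γ.Adj u w := (hd2 u w (hfd u v h)).1
    set w' := f v w with hw'def
    have hBsubA : Γ.neighborSet v ∩ Γ.neighborSet w ⊆ Γ.neighborSet v \ {u, w} := by
      rintro x ⟨hx1, hx2⟩
      refine ⟨hx1, ?_⟩
      rintro (rfl | rfl)
      · exact hnadj hx2.symm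
      · exact Γ.irrefl hx2
    have hsub2 : Γ.neighborSet w ⊆ (Γ.neighborSet v ∩ Γ.neighborSet w) ∪ {v, w'} := by
      intro x hx
      by_cases hxv : x = v
      · exact Or.inr (Or.inl hxv)
      by_cases hxw' : x = w'
      · exact Or.inr (Or.inr hxw')
      · exact Or.inl ⟨HC v w hvw x hx hxv hxw', hx⟩
    have c1 : k ≤ (Γ.neighborSet v ∩ Γ.neighborSet w).ncard + 2 := by
      have h1 : (Γ.neighborSet w).ncard ≤
          ((Γ.neighborSet v ∩ Γ.neighborSet w) ∪ {v, w'}).ncard :=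
        Set.ncard_le_ncard hsub2
      have h2 : ((Γ.neighborSet v ∩ Γ.neighborSet w) ∪ {v, w'}).ncard ≤
          (Γ.neighborSet v ∩ Γ.neighborSet w).ncard + ({v, w'} : Set V).ncard :=
        Set.ncard_union_le _ _
      have h3 : ({v, w'} : Set V).ncard ≤ 2 := by
        refine le_trans (Set.ncard_insert_le _ _) ?_
        simp
      rw [hreg] at h1
      omega
    have hA : (Γ.neighborSet v \ {u, w}).ncard = k - 2 := Hdiff u v h
    have heq : Γ.neighborSet v ∩ Γ.neighborSet w = Γ.neighborSet v \ {u, w} :=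
      Set.eq_of_subset_of_ncard_le hBsubA (by rw [hA]; omega)
    have hsmem : s ∈ Γ.neighborSet v \ {u, w} := by
      refine ⟨hs, ?_⟩
      rintro (rfl | rfl)
      · exact hsu rfl
      · exact hsw rfl
    rw [← heq] at hsmem
    exact hsmem.2.symm
  -- well-definedness of the mate
  have HE : ∀ u v v', Γ.Adj u v → Γ.Adj u v' → f u v = f u v' := by
    intro u v v' h h'
    by_contra hne'
    set w := f u v with hw
    set w' := f u v' with hw'
    set T := insert v (Γ.neighborSet v \ {u, w}) with hT
    set T' := insert v' (Γ.neighborSet v' \ {u, w'}) with hT'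
    have key : ∀ x ∈ T, Γ.Adj u x ∧ f u x = w := by
      rintro x (rfl | hx)
      · exact ⟨h, rfl⟩
      · obtain ⟨hx1, hx2⟩ := hx
        have hxu : x ≠ u := fun h'' => hx2 (by simp [h''])
        have hxw : x ≠ w := fun h'' => hx2 (by simp [h''])
        have hux : Γ.Adj u x := HC u v h x hx1 hxu hxw
        have hxw2 : Γ.Adj x w := HS u v h x hx1 hxu hxw
        exact ⟨hux, (hf2 u x hux w hxw2 (hfd u v h)).symm⟩
    have key' : ∀ x ∈ T', Γ.Adj u x ∧ f u x = w' := by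
      rintro x (rfl | hx)
      · exact ⟨h', rfl⟩
      · obtain ⟨hx1, hx2⟩ := hx
        have hxu : x ≠ u := fun h'' => hx2 (by simp [h''])
        have hxw : x ≠ w' := fun h'' => hx2 (by simp [h''])
        have hux : Γ.Adj u x := HC u v' h' x hx1 hxu hxw
        have hxw2 : Γ.Adj x w' := HS u v' h' x hx1 hxu hxw
        exact ⟨hux, (hf2 u x hux w' hxw2 (hfd u v' h')).symm⟩
    have hdisj : Disjoint T T' := by
      rw [Set.disjoint_left]
      intro x hx hx'
      exact hne' (((key x hx).2.symm).trans (key' x hx').2)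
    have hTsub : T ∪ T' ⊆ Γ.neighborSet u := by
      rintro x (hx | hx)
      · exact (key x hx).1
      · exact (key' x hx).1
    have hvd : v ∉ Γ.neighborSet v \ {u, w} := fun h'' => Γ.irrefl h''.1
    have hvd' : v' ∉ Γ.neighborSet v' \ {u, w'} := fun h'' => Γ.irrefl h''.1
    have hcT : T.ncard = k - 1 := by
      rw [hT, Set.ncard_insert_of_notMem hvd, Hdiff u v h]
      omega
    have hcT' : T'.ncard = k - 1 := by
      rw [hT', Set.ncard_insert_of_notMem hvd', Hdiff u v' h']
      omega
    have hcU : (T ∪ T').ncard = (k - 1) + (k - 1) := by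
      rw [Set.ncard_union_eq hdisj, hcT, hcT']
    have : (T ∪ T').ncard ≤ k := by
      have := Set.ncard_le_ncard hTsub
      rwa [hreg] at this
    omega
  -- the mate function
  have hmate_ex : ∀ u : V, ∃ x, Γ.dist u x = 2 ∧ ∀ y, Γ.dist u y = 2 → y = x := by
    intro u
    have hnb : (Γ.neighborSet u).Nonempty :=
      Set.nonempty_of_ncard_ne_zero (by rw [hreg]; omega)
    obtain ⟨v, hv⟩ := hnb
    refine ⟨f u v, hfd u v hv, ?_⟩
    intro y hy
    obtain ⟨v', hv'1, hv'2⟩ := H3 u y hy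
    have : y = f u v' := hf2 u v' hv'1 y hv'2 hy
    rw [this, HE u v' v hv'1 hv]
  choose mate hmd hmu using hmate_ex
  have hm_nadj : ∀ u, ¬ Γ.Adj u (mate u) := fun u => (hd2 u (mate u) (hmd u)).1
  have hm_ne : ∀ u, mate u ≠ u := fun u => (hd2 u (mate u) (hmd u)).2
  have hm_invol : ∀ u, mate (mate u) = u := by
    intro u
    have : Γ.dist (mate u) u = 2 := by rw [SimpleGraph.dist_comm]; exact hmd u
    exact (hmu (mate u) u this).symm
  have mate_f : ∀ u v, Γ.Adj u v → f u v = mate u := fun u v h => hmu u _ (hfd u v h)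
  -- closure / cardinality
  obtain ⟨u₀⟩ := hne
  have hnb₀ : (Γ.neighborSet u₀).Nonempty :=
    Set.nonempty_of_ncard_ne_zero (by rw [hreg]; omega)
  obtain ⟨v₀, hv₀⟩ := hnb₀
  set w₀ := mate u₀ with hw₀def
  set T₀ : Set V := insert u₀ (insert w₀ (Γ.neighborSet u₀)) with hT₀
  have hfv₀ : f u₀ v₀ = w₀ := mate_f u₀ v₀ hv₀
  have hv₀w₀ : Γ.Adj v₀ w₀ := hfv₀ ▸ hfadj u₀ v₀ hv₀
  have hCL : ∀ a b, a ∈ T₀ → Γ.Adj a b → b ∈ T₀ := by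
    intro a b ha hab
    rcases ha with rfl | rfl | ha
    · exact Or.inr (Or.inr hab)
    · -- a = w₀
      by_cases hbu : b = u₀
      · exact Or.inl hbu
      by_cases hbw : b = w₀
      · exact Or.inr (Or.inl hbw)
      by_cases hbn : Γ.Adj u₀ b
      · exact Or.inr (Or.inr hbn)
      by_cases hbv : b = v₀
      · exact Or.inr (Or.inr (hbv ▸ hv₀))
      by_cases hbv' : Γ.Adj v₀ b
      · exact Or.inr (Or.inr (HC u₀ v₀ hv₀ b hbv' hbu (hfv₀ ▸ hbw)))
      -- now b = f v₀ w₀, derive contradiction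
      exfalso
      have hb : b = f v₀ w₀ := by
        by_contra hne'
        exact hbv' (HC v₀ w₀ hv₀w₀ b hab hbv hne')
      have hmw : mate w₀ = u₀ := by
        refine (hmu w₀ u₀ ?_).symm
        rw [SimpleGraph.dist_comm]
        exact hmd u₀
      have hw₀b : Γ.Adj w₀ b := hab
      have hfw₀b : f w₀ b = u₀ := (mate_f w₀ b hw₀b).trans hmw
      have hNb : Γ.neighborSet b ⊆ insert w₀ (Γ.neighborSet w₀ \ {b}) := by
        intro x hx
        by_cases hxw : x = w₀
        · exact Or.inl hxw
        have hxu : x ≠ u₀ := by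
          rintro rfl
          exact hbn hx.symm
        have : Γ.Adj w₀ x := HC w₀ b hw₀b x hx hxw (hfw₀b ▸ hxu)
        exact Or.inr ⟨this, fun h'' => Γ.irrefl (h'' ▸ hx)⟩
      have hbmem : b ∈ Γ.neighborSet w₀ := hw₀b
      have hc1 : (insert w₀ (Γ.neighborSet w₀ \ {b})).ncard ≤ k := by
        refine le_trans (Set.ncard_insert_le _ _) ?_
        rw [Set.ncard_diff_singleton_of_mem hbmem, hreg]
        omega
      have heq : Γ.neighborSet b = insert w₀ (Γ.neighborSet w₀ \ {b}) :=
        Set.eq_of_subset_of_ncard_le hNb (by rw [hreg]; exact hc1)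
      have hv₀b : v₀ ∈ Γ.neighborSet b := by
        rw [heq]
        refine Or.inr ⟨hv₀w₀.symm, ?_⟩
        rintro rfl
        exact hbn hv₀
      exact hbv' hv₀b.symm
    · -- a ∈ N(u₀)
      by_cases hbu : b = u₀
      · exact Or.inl hbu
      by_cases hbw : b = w₀
      · exact Or.inr (Or.inl hbw)
      · have hfa : f u₀ a = w₀ := mate_f u₀ a ha
        exact Or.inr (Or.inr (HC u₀ a ha b hab hbu (hfa ▸ hbw)))
  clear_value T₀ w₀
  have key : ∀ (a b : V) (q : Γ.Walk a b), a ∈ T₀ → b ∈ T₀ := by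
    intro a b q
    induction q with
    | nil => exact id
    | cons h' q2 ih => exact fun ha => ih (hCL _ _ ha h')
  have hT₀univ : ∀ x, x ∈ T₀ := by
    intro x
    obtain ⟨p⟩ := hconn u₀ x
    exact key u₀ x p (by rw [hT₀]; exact Or.inl rfl)
  have hu₀w₀ : u₀ ∉ insert w₀ (Γ.neighborSet u₀) := by
    rintro (h'' | h'')
    · exact hm_ne u₀ (h''.trans hw₀def).symm
    · exact Γ.irrefl h''
  have hw₀mem : w₀ ∉ Γ.neighborSet u₀ := by rw [hw₀def]; exact hm_nadj u₀
  have hcardV : Fintype.card V = k + 2 := by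
    have huniv : (Set.univ : Set V) = T₀ := Set.eq_univ_of_forall hT₀univ |>.symm
    have h1 : (Set.univ : Set V).ncard = T₀.ncard := by rw [huniv]
    rw [Set.ncard_univ, Nat.card_eq_fintype_card] at h1
    rw [h1, hT₀, Set.ncard_insert_of_notMem hu₀w₀,
      Set.ncard_insert_of_notMem hw₀mem, hreg]
  -- every non-mate pair is adjacent
  have hall : ∀ a b, b ≠ a → b ≠ mate a → Γ.Adj a b := by
    intro a b hba hbm
    have hnm : mate a ∉ Γ.neighborSet a := hm_nadj a
    have hnm2 : a ∉ insert (mate a) (Γ.neighborSet a) := by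
      rintro (h'' | h'')
      · exact hm_ne a h''.symm
      · exact Γ.irrefl h''
    have hTa : insert a (insert (mate a) (Γ.neighborSet a)) = Set.univ := by
      refine Set.eq_of_subset_of_ncard_le (Set.subset_univ _) ?_
      rw [Set.ncard_univ, Nat.card_eq_fintype_card, hcardV,
        Set.ncard_insert_of_notMem hnm2, Set.ncard_insert_of_notMem hnm, hreg]
    have : b ∈ insert a (insert (mate a) (Γ.neighborSet a)) := by
      rw [hTa]; trivial
    rcases this with rfl | rfl | hb
    · exact absurd rfl hba
    · exact absurd rfl hbm
    · exact hb
  have hadj_iff : ∀ a b, Γ.Adj a b ↔ (b ≠ a ∧ b ≠ mate a) := by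
    intro a b
    constructor
    · intro h
      exact ⟨fun h' => Γ.irrefl (h' ▸ h), fun h' => hm_nadj a (h' ▸ h)⟩
    · intro ⟨h1, h2⟩
      exact hall a b h1 h2
  exact matching_iso Γ k mate hm_invol hm_ne hadj_iff hcardV

/-- A connected 2-distance-transitive graph of valency `k ≥ 3` with
intersection number `b₁ = 1` has `k` even and is isomorphic to the complete multipartite
graph `K_{(k+2)/2 [2]}` with `(k+2)/2` parts of size `2`. -/
theorem stmt11 {V : Type*} [Fintype V] (Γ : SimpleGraph V) (k : ℕ) (hk : 3 ≤ k)
    (hconn : Γ.Connected)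
    (hreg : ∀ v, (Γ.neighborSet v).ncard = k)
    (h2dt : TwoDistanceTransitive Γ)
    (hb₁ : ∀ u v, Γ.Adj u v → {w | Γ.Adj v w ∧ Γ.dist u w = 2}.ncard = 1) :
    Even k ∧
    Nonempty (Γ ≃g SimpleGraph.completeMultipartiteGraph (fun _ : Fin ((k + 2) / 2) => Fin 2)) := by
  exact stmt11' Γ k hk hconn hreg hb₁
end

section
/- Let Γ be a connected 2-distance-transitive graph of valency k ≥ 3, diameter d ≥ 3, with intersection numbers b₁ = c₂ = k - 1. Then Γ is isomorphic to K_{k+1,k+1} minus a perfect matching. -/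
/-- The complete bipartite graph `K_{n,n}` minus a perfect matching: vertices
`Fin n × Bool`, with `(a,i) ~ (b,j)` iff `a ≠ b` and `i ≠ j`. -/
def KnnMinusMatching (n : ℕ) : SimpleGraph (Fin n × Bool) where
  Adj a b := a.1 ≠ b.1 ∧ a.2 ≠ b.2
  symm := ⟨fun _ _ h => ⟨Ne.symm h.1, Ne.symm h.2⟩⟩
  loopless := ⟨fun _ h => h.1 rfl⟩

/-- Auxiliary function building the vertex map for statement 12. -/
def mkFun {V : Type*} {k : ℕ} (u xb : V) (m : V → V) (q : Fin k → V) :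
    Fin (k + 1) × Bool → V := fun p =>
  Fin.cases (cond p.2 xb u) (fun j => cond p.2 (m (q j)) (q j)) p.1

@[simp] lemma mkFun_zero_false {V : Type*} {k : ℕ} (u xb : V) (m : V → V) (q : Fin k → V) :
    mkFun u xb m q (0, false) = u := rfl

@[simp] lemma mkFun_zero_true {V : Type*} {k : ℕ} (u xb : V) (m : V → V) (q : Fin k → V) :
    mkFun u xb m q (0, true) = xb := rfl

@[simp] lemma mkFun_succ_false {V : Type*} {k : ℕ} (u xb : V) (m : V → V) (q : Fin k → V)
    (j : Fin k) : mkFun u xb m q (j.succ, false) = q j := by simp [mkFun]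

@[simp] lemma mkFun_succ_true {V : Type*} {k : ℕ} (u xb : V) (m : V → V) (q : Fin k → V)
    (j : Fin k) : mkFun u xb m q (j.succ, true) = m (q j) := by simp [mkFun]

/-- A connected 2-distance-transitive graph of valency `k ≥ 3`, diameter
`≥ 3`, with `b₁ = c₂ = k - 1`, is isomorphic to `K_{k+1,k+1}` minus a perfect matching. -/
theorem stmt12 {V : Type*} [Fintype V] (Γ : SimpleGraph V) (k : ℕ) (hk : 3 ≤ k)
    (hconn : Γ.Connected)
    (hreg : ∀ v, (Γ.neighborSet v).ncard = k)
    (h2dt : TwoDistanceTransitive Γ)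
    (hdiam : ∃ u v, 3 ≤ Γ.dist u v)
    (hb₁ : ∀ u v, Γ.Adj u v → {w | Γ.Adj v w ∧ Γ.dist u w = 2}.ncard = k - 1)
    (hc₂ : ∀ u w, Γ.dist u w = 2 → (Γ.neighborSet u ∩ Γ.neighborSet w).ncard = k - 1) :
    Nonempty (Γ ≃g KnnMinusMatching (k + 1)) := by
  classical
  obtain ⟨u, y0, hy0⟩ := hdiam
  -- degrees as Finset cards
  have hdeg : ∀ v, (Γ.neighborFinset v).card = k := by
    intro v
    rw [SimpleGraph.neighborFinset_def, ← Set.ncard_eq_toFinset_card']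
    exact hreg v
  have hdistadj : ∀ a b, Γ.Adj a b → Γ.dist a b = 1 := fun a b h =>
    SimpleGraph.dist_eq_one_iff_adj.mpr h
  -- stepping down along geodesics
  have step : ∀ (d : ℕ) (y : V), Γ.dist u y = d + 1 → ∃ z, Γ.Adj z y ∧ Γ.dist u z = d := by
    intro d y hdy
    obtain ⟨p, hp⟩ := hconn.exists_walk_length_eq_dist y u
    rw [SimpleGraph.dist_comm, hdy] at hp
    cases p with
    | nil => simp at hp
    | cons hadj q =>
      rename_i z
      rw [SimpleGraph.Walk.length_cons] at hp
      refine ⟨z, hadj.symm, ?_⟩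
      have h1 : Γ.dist u z ≤ q.length := by
        have := Γ.dist_le q.reverse
        rwa [SimpleGraph.Walk.length_reverse] at this
      have h2 : Γ.dist u y ≤ Γ.dist u z + 1 := by
        have ht := hconn.dist_triangle (u := u) (v := z) (w := y)
        rwa [hdistadj z y hadj.symm] at ht
      omega
  have down : ∀ (n : ℕ) (y : V), Γ.dist u y = n → ∀ d ≤ n, ∃ z, Γ.dist u z = d := by
    intro n
    induction n with
    | zero => intro y h d hd; exact ⟨y, by omega⟩
    | succ m ih =>
      intro y h d hd
      rcases Nat.eq_or_lt_of_le hd with rfl | hlt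
      · exact ⟨y, h⟩
      · obtain ⟨z, _, hz⟩ := step m y h
        exact ih z hz d (by omega)
  -- triangle-freeness
  have nbr2 : ∀ a b c, Γ.Adj a b → Γ.Adj b c → a ≠ c → Γ.dist a c = 2 := by
    intro a b c hab hbc hac
    have hTcard := hb₁ a b hab
    have hsub : {w | Γ.Adj b w ∧ Γ.dist a w = 2} ⊆ ↑((Γ.neighborFinset b).erase a) := by
      rintro x ⟨h1, h2⟩
      rw [Finset.mem_coe, Finset.mem_erase, SimpleGraph.mem_neighborFinset]
      refine ⟨?_, h1⟩
      rintro rfl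
      rw [SimpleGraph.dist_self] at h2
      omega
    have hT : {w | Γ.Adj b w ∧ Γ.dist a w = 2} = ↑((Γ.neighborFinset b).erase a) := by
      apply Set.eq_of_subset_of_ncard_le hsub _ (Finset.finite_toSet _)
      rw [Set.ncard_coe_finset,
        Finset.card_erase_of_mem (by simpa using hab.symm), hdeg b, hTcard]
    have hc : c ∈ {w | Γ.Adj b w ∧ Γ.dist a w = 2} := by
      rw [hT, Finset.mem_coe, Finset.mem_erase, SimpleGraph.mem_neighborFinset]
      exact ⟨Ne.symm hac, hbc⟩
    exact hc.2
  have tfree : ∀ a b c, Γ.Adj a b → Γ.Adj b c → ¬ Γ.Adj a c := by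
    intro a b c hab hbc hac
    have h2 := nbr2 a b c hab hbc hac.ne
    have h1 := hdistadj a c hac
    omega
  -- the two spheres
  set S1 : Finset V := Γ.neighborFinset u with hS1def
  set S2 : Finset V := Finset.univ.filter (fun v => Γ.dist u v = 2) with hS2def
  have hmemS1 : ∀ w, w ∈ S1 ↔ Γ.Adj u w := by intro w; simp [hS1def]
  have hmemS2 : ∀ v, v ∈ S2 ↔ Γ.dist u v = 2 := by intro v; simp [hS2def]
  have hS1card : S1.card = k := hdeg u
  have key1 : ∀ w ∈ S1, (S2.filter (fun v => Γ.Adj w v)).card = k - 1 := by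
    intro w hw
    have hadj : Γ.Adj u w := (hmemS1 w).1 hw
    have hset : {x | Γ.Adj w x ∧ Γ.dist u x = 2} = ↑(S2.filter (fun v => Γ.Adj w v)) := by
      ext x
      simp only [Set.mem_setOf_eq, Finset.mem_coe, Finset.mem_filter]
      constructor
      · rintro ⟨h1, h2⟩; exact ⟨(hmemS2 x).2 h2, h1⟩
      · rintro ⟨h1, h2⟩; exact ⟨h2, (hmemS2 x).1 h1⟩
    have h := hb₁ u w hadj
    rwa [hset, Set.ncard_coe_finset] at h
  have key2 : ∀ v ∈ S2, (S1.filter (fun w => Γ.Adj w v)).card = k - 1 := by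
    intro v hv
    have hd : Γ.dist u v = 2 := (hmemS2 v).1 hv
    have hset : (Γ.neighborSet u ∩ Γ.neighborSet v : Set V)
        = ↑(S1.filter (fun w => Γ.Adj w v)) := by
      ext w
      simp only [Set.mem_inter_iff, SimpleGraph.mem_neighborSet, Finset.mem_coe,
        Finset.mem_filter]
      constructor
      · rintro ⟨h1, h2⟩; exact ⟨(hmemS1 w).2 h1, h2.symm⟩
      · rintro ⟨h1, h2⟩; exact ⟨(hmemS1 w).1 h1, h2.symm⟩
    have h := hc₂ u v hd
    rwa [hset, Set.ncard_coe_finset] at h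
  -- double counting gives |S2| = k
  have hS2card : S2.card = k := by
    have h1 : ∑ w ∈ S1, (S2.filter (fun v => Γ.Adj w v)).card = S1.card * (k - 1) :=
      Finset.sum_const_nat key1
    have h2 : ∑ v ∈ S2, (S1.filter (fun w => Γ.Adj w v)).card = S2.card * (k - 1) :=
      Finset.sum_const_nat key2
    have h3 : ∑ w ∈ S1, (S2.filter (fun v => Γ.Adj w v)).card
        = ∑ v ∈ S2, (S1.filter (fun w => Γ.Adj w v)).card := by
      simp_rw [Finset.card_filter]
      exact Finset.sum_comm
    rw [h1, h2, hS1card] at h3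
    have hk1 : 0 < k - 1 := by omega
    exact (Nat.eq_of_mul_eq_mul_right hk1 h3).symm
  -- the "missed neighbor" function m : S2 → S1
  have hmcard : ∀ v ∈ S2, (S1.filter (fun w => ¬ Γ.Adj w v)).card = 1 := by
    intro v hv
    rw [Finset.filter_not, Finset.card_sdiff_of_subset (Finset.filter_subset _ _), key2 v hv, hS1card]
    omega
  have hmv : ∀ v : V, ∃ w, v ∈ S2 → S1.filter (fun w' => ¬ Γ.Adj w' v) = {w} := by
    intro v
    by_cases hv : v ∈ S2
    · obtain ⟨w, hw⟩ := Finset.card_eq_one.mp (hmcard v hv)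
      exact ⟨w, fun _ => hw⟩
    · exact ⟨v, fun h => absurd h hv⟩
  choose m hm using hmv
  have hmmem : ∀ v ∈ S2, m v ∈ S1 ∧ ¬ Γ.Adj (m v) v := by
    intro v hv
    have h : m v ∈ S1.filter (fun w' => ¬ Γ.Adj w' v) := by
      rw [hm v hv]; exact Finset.mem_singleton_self _
    simpa using h
  have hadjm : ∀ v ∈ S2, ∀ w ∈ S1, (Γ.Adj w v ↔ w ≠ m v) := by
    intro v hv w hw
    constructor
    · rintro h rfl; exact (hmmem v hv).2 h
    · intro hne
      by_contra hadj
      have h : w ∈ S1.filter (fun w' => ¬ Γ.Adj w' v) := Finset.mem_filter.mpr ⟨hw, hadj⟩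
      rw [hm v hv, Finset.mem_singleton] at h
      exact hne h
  have hw1 : ∀ w ∈ S1, (S2.filter (fun v => ¬ Γ.Adj w v)).card = 1 := by
    intro w hw
    rw [Finset.filter_not, Finset.card_sdiff_of_subset (Finset.filter_subset _ _), key1 w hw, hS2card]
    omega
  have hminj : ∀ v ∈ S2, ∀ v' ∈ S2, m v = m v' → v = v' := by
    intro v hv v' hv' hmeq
    have h1 : v ∈ S2.filter (fun x => ¬ Γ.Adj (m v) x) :=
      Finset.mem_filter.mpr ⟨hv, (hmmem v hv).2⟩
    have h2 : v' ∈ S2.filter (fun x => ¬ Γ.Adj (m v) x) := by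
      refine Finset.mem_filter.mpr ⟨hv', ?_⟩
      rw [hmeq]; exact (hmmem v' hv').2
    exact Finset.card_le_one.mp (le_of_eq (hw1 (m v) (hmmem v hv).1)) v h1 v' h2
  have hmsurj : ∀ w ∈ S1, ∃ v, v ∈ S2 ∧ m v = w := by
    intro w hw
    obtain ⟨v, hveq⟩ := Finset.card_eq_one.mp (hw1 w hw)
    have hvmem : v ∈ S2.filter (fun v => ¬ Γ.Adj w v) := by
      rw [hveq]; exact Finset.mem_singleton_self _
    rw [Finset.mem_filter] at hvmem
    refine ⟨v, hvmem.1, ?_⟩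
    by_contra hne
    exact hvmem.2 ((hadjm v hvmem.1 w hw).mpr (Ne.symm hne))
  -- the extra neighbor e : S2 → Γ₃(u)
  have hecard : ∀ v ∈ S2, (Γ.neighborFinset v \ S1).card = 1 := by
    intro v hv
    have hint : (Γ.neighborFinset v ∩ S1).card = k - 1 := by
      have heq : Γ.neighborFinset v ∩ S1 = S1.filter (fun w => Γ.Adj w v) := by
        ext w
        simp only [Finset.mem_inter, SimpleGraph.mem_neighborFinset, Finset.mem_filter]
        constructor
        · rintro ⟨h1, h2⟩; exact ⟨h2, h1.symm⟩
        · rintro ⟨h1, h2⟩; exact ⟨h2.symm, h1⟩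
      rw [heq, key2 v hv]
    have h := Finset.card_sdiff_add_card_inter (Γ.neighborFinset v) S1
    rw [hint, hdeg v] at h
    omega
  have hev : ∀ v : V, ∃ x, v ∈ S2 → Γ.neighborFinset v \ S1 = {x} := by
    intro v
    by_cases hv : v ∈ S2
    · obtain ⟨x, hx⟩ := Finset.card_eq_one.mp (hecard v hv)
      exact ⟨x, fun _ => hx⟩
    · exact ⟨v, fun h => absurd h hv⟩
  choose e he using hev
  have heprop : ∀ v ∈ S2, Γ.Adj v (e v) ∧ ¬ Γ.Adj u (e v) := by
    intro v hv
    have h : e v ∈ Γ.neighborFinset v \ S1 := by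
      rw [he v hv]; exact Finset.mem_singleton_self _
    rw [Finset.mem_sdiff, SimpleGraph.mem_neighborFinset, hmemS1] at h
    exact h
  have heuniq : ∀ v ∈ S2, ∀ y, Γ.Adj v y → ¬ Γ.Adj u y → y = e v := by
    intro v hv y h1 h2
    have h : y ∈ Γ.neighborFinset v \ S1 := by
      rw [Finset.mem_sdiff, SimpleGraph.mem_neighborFinset, hmemS1]
      exact ⟨h1, h2⟩
    rw [he v hv, Finset.mem_singleton] at h
    exact h
  -- common neighbors of pairs in S2, non-adjacency within S2
  have hcommon : ∀ v ∈ S2, ∀ v' ∈ S2, ∃ w, Γ.Adj w v ∧ Γ.Adj w v' := by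
    intro v hv v' hv'
    by_contra hno
    push_neg at hno
    have hdisj : Disjoint (S1.filter (fun w => Γ.Adj w v)) (S1.filter (fun w => Γ.Adj w v')) := by
      rw [Finset.disjoint_left]
      intro w h1 h2
      exact hno w (Finset.mem_filter.mp h1).2 (Finset.mem_filter.mp h2).2
    have hle : ((S1.filter (fun w => Γ.Adj w v)) ∪ (S1.filter (fun w => Γ.Adj w v'))).card
        ≤ S1.card :=
      Finset.card_le_card
        (Finset.union_subset (Finset.filter_subset _ _) (Finset.filter_subset _ _))
    rw [Finset.card_union_of_disjoint hdisj, key2 v hv, key2 v' hv', hS1card] at hle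
    omega
  have hS2nonadj : ∀ v ∈ S2, ∀ v' ∈ S2, ¬ Γ.Adj v v' := by
    intro v hv v' hv' hadj
    obtain ⟨w, h1, h2⟩ := hcommon v hv v' hv'
    exact tfree w v v' h1 hadj h2
  have hA3 : ∀ v ∈ S2, ¬ Γ.Adj u v := by
    intro v hv h
    have h1 := hdistadj u v h
    have h2 := (hmemS2 v).1 hv
    omega
  have hev3 : ∀ v ∈ S2, Γ.dist u (e v) = 3 := by
    intro v hv
    obtain ⟨hadj, hnadju⟩ := heprop v hv
    have hd2 : Γ.dist u v = 2 := (hmemS2 v).1 hv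
    have hle : Γ.dist u (e v) ≤ 3 := by
      have ht := hconn.dist_triangle (u := u) (v := v) (w := e v)
      rw [hd2, hdistadj v (e v) hadj] at ht
      omega
    have hne_u : e v ≠ u := by
      rintro rfl
      exact hA3 v hv hadj.symm
    have h0 : Γ.dist u (e v) ≠ 0 := (hconn.pos_dist_of_ne (Ne.symm hne_u)).ne'
    have h1 : Γ.dist u (e v) ≠ 1 := fun h =>
      hnadju (SimpleGraph.dist_eq_one_iff_adj.mp h)
    have h2 : Γ.dist u (e v) ≠ 2 := by
      intro h
      exact hS2nonadj v hv (e v) ((hmemS2 _).2 h) hadj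
    omega
  have hS2dist : ∀ v ∈ S2, ∀ v' ∈ S2, v ≠ v' → Γ.dist v v' = 2 := by
    intro v hv v' hv' hne
    obtain ⟨w, h1, h2⟩ := hcommon v hv v' hv'
    have hle : Γ.dist v v' ≤ 2 := by
      have ht := hconn.dist_triangle (u := v) (v := w) (w := v')
      rw [hdistadj v w h1.symm, hdistadj w v' h2] at ht
      omega
    have hd1 : Γ.dist v v' ≠ 1 := fun h =>
      hS2nonadj v hv v' hv' (SimpleGraph.dist_eq_one_iff_adj.mp h)
    have hd0 : Γ.dist v v' ≠ 0 := (hconn.pos_dist_of_ne hne).ne'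
    omega
  -- the extra neighbor is the same for all of S2
  have heconst : ∀ v ∈ S2, ∀ v' ∈ S2, v ≠ v' → e v = e v' := by
    intro v hv v' hv' hne
    by_contra hnee
    have hd := hS2dist v hv v' hv' hne
    have hCf : (Γ.neighborFinset v ∩ Γ.neighborFinset v').card = k - 1 := by
      have hcoe : ↑(Γ.neighborFinset v ∩ Γ.neighborFinset v')
          = (Γ.neighborSet v ∩ Γ.neighborSet v' : Set V) := by
        rw [Finset.coe_inter, SimpleGraph.neighborFinset_def, SimpleGraph.neighborFinset_def,
          Set.coe_toFinset, Set.coe_toFinset]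
      rw [← Set.ncard_coe_finset, hcoe, hc₂ v v' hd]
    have hsub : Γ.neighborFinset v ∩ Γ.neighborFinset v' ⊆ S1 \ {m v, m v'} := by
      intro y hy
      rw [Finset.mem_inter, SimpleGraph.mem_neighborFinset, SimpleGraph.mem_neighborFinset] at hy
      by_cases hu : Γ.Adj u y
      · have hyS1 : y ∈ S1 := (hmemS1 y).2 hu
        rw [Finset.mem_sdiff]
        refine ⟨hyS1, ?_⟩
        simp only [Finset.mem_insert, Finset.mem_singleton]
        push_neg
        exact ⟨(hadjm v hv y hyS1).mp hy.1.symm, (hadjm v' hv' y hyS1).mp hy.2.symm⟩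
      · have h1 := heuniq v hv y hy.1 hu
        have h2 := heuniq v' hv' y hy.2 hu
        exact absurd (h1 ▸ h2 : e v = e v').symm (Ne.symm hnee)
    have hmm : ({m v, m v'} : Finset V) ⊆ S1 := by
      intro z hz
      rcases Finset.mem_insert.mp hz with rfl | hz
      · exact (hmmem v hv).1
      · rw [Finset.mem_singleton] at hz
        subst hz
        exact (hmmem v' hv').1
    have hcard2 : (S1 \ {m v, m v'}).card = k - 2 := by
      rw [Finset.card_sdiff_of_subset hmm, hS1card, Finset.card_insert_of_notMem (by
        rw [Finset.mem_singleton]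
        exact fun h => hne (hminj v hv v' hv' h)), Finset.card_singleton]
    have hle := Finset.card_le_card hsub
    rw [hCf, hcard2] at hle
    omega
  -- choose a base point in S2 and the antipode xb
  obtain ⟨x3, hx3⟩ := down _ y0 rfl 3 hy0
  obtain ⟨v₀, hv₀adj, hv₀d⟩ := step 2 x3 hx3
  have hv₀ : v₀ ∈ S2 := (hmemS2 _).2 hv₀d
  set xb := e v₀ with hxbdef
  have hxb3 : Γ.dist u xb = 3 := hev3 v₀ hv₀
  have hevall : ∀ v ∈ S2, e v = xb := by
    intro v hv
    by_cases h : v = v₀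
    · rw [h]
    · exact heconst v hv v₀ hv₀ h
  have hadjxb : ∀ v ∈ S2, Γ.Adj v xb := fun v hv => (hevall v hv) ▸ (heprop v hv).1
  have hnxb : Γ.neighborFinset xb = S2 := by
    refine (Finset.eq_of_subset_of_card_le ?_ ?_).symm
    · intro v hv
      rw [SimpleGraph.mem_neighborFinset]
      exact (hadjxb v hv).symm
    · rw [hdeg xb, hS2card]
  have h3uniq : ∀ y, Γ.dist u y = 3 → y = xb := by
    intro y hy
    obtain ⟨z, hzadj, hz2⟩ := step 2 y hy
    have hzS2 : z ∈ S2 := (hmemS2 _).2 hz2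
    have hnuy : ¬ Γ.Adj u y := by
      intro h
      have := hdistadj u y h
      omega
    rw [heuniq z hzS2 y hzadj hnuy, hevall z hzS2]
  have hd4 : ∀ y, Γ.dist u y ≠ 4 := by
    intro y hy
    obtain ⟨z, hzadj, hz3⟩ := step 3 y hy
    have hz := h3uniq z hz3
    subst hz
    have hyS2 : y ∈ Γ.neighborFinset xb := (SimpleGraph.mem_neighborFinset _ _ _).mpr hzadj
    rw [hnxb] at hyS2
    have := (hmemS2 y).1 hyS2
    omega
  have hdle : ∀ y, Γ.dist u y ≤ 3 := by
    intro y
    by_contra h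
    push_neg at h
    obtain ⟨z, hz⟩ := down (Γ.dist u y) y rfl 4 (by omega)
    exact hd4 z hz
  have hclass : ∀ y : V, y = u ∨ y ∈ S1 ∨ y ∈ S2 ∨ y = xb := by
    intro y
    have hle := hdle y
    have hcases : Γ.dist u y = 0 ∨ Γ.dist u y = 1 ∨ Γ.dist u y = 2 ∨ Γ.dist u y = 3 := by omega
    rcases hcases with h | h | h | h
    · exact Or.inl (hconn.dist_eq_zero_iff.mp h).symm
    · exact Or.inr (Or.inl ((hmemS1 y).2 (SimpleGraph.dist_eq_one_iff_adj.mp h)))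
    · exact Or.inr (Or.inr (Or.inl ((hmemS2 y).2 h)))
    · exact Or.inr (Or.inr (Or.inr (h3uniq y h)))
  -- enumeration of S2
  have hScard' : Fintype.card {x // x ∈ S2} = k := by
    rw [Fintype.card_coe]; exact hS2card
  set Eq2 : {x // x ∈ S2} ≃ Fin k := Fintype.equivFinOfCardEq hScard' with hEq2def
  set q : Fin k → V := fun j => ((Eq2.symm j : {x // x ∈ S2}) : V) with hqdef
  have hq : ∀ j, q j ∈ S2 := fun j => (Eq2.symm j).2
  have hqinj : ∀ i j, q i = q j → i = j := by
    intro i j h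
    have := Eq2.symm.injective (Subtype.ext h)
    exact this
  have hqval : ∀ (v : V) (hv : v ∈ S2), q (Eq2 ⟨v, hv⟩) = v := by
    intro v hv
    simp [hqdef]
  set F : Fin (k + 1) × Bool → V := mkFun u xb m q with hFdef
  -- adjacency facts
  have hA2 : ¬ Γ.Adj u xb := by
    intro h
    have := hdistadj u xb h
    omega
  have hA4 : ∀ v ∈ S2, Γ.Adj u (m v) := fun v hv => (hmemS1 _).1 (hmmem v hv).1
  have hA7' : ∀ v ∈ S2, ∀ v' ∈ S2, (Γ.Adj v (m v') ↔ v ≠ v') := by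
    intro v hv v' hv'
    have h1 : Γ.Adj (m v') v ↔ m v' ≠ m v := hadjm v hv (m v') (hmmem v' hv').1
    rw [Γ.adj_comm, h1]
    constructor
    · intro h hne
      exact h (hne ▸ rfl)
    · intro hne h
      exact hne (hminj v' hv' v hv h).symm
  have hA8 : ∀ v ∈ S2, ∀ v' ∈ S2, ¬ Γ.Adj (m v) (m v') := by
    intro v hv v' hv'
    exact tfree (m v) u (m v') (hA4 v hv).symm (hA4 v' hv')
  have hA9 : ∀ v ∈ S2, ¬ Γ.Adj xb (m v) := by
    intro v hv h
    have hmem : m v ∈ Γ.neighborFinset xb := (SimpleGraph.mem_neighborFinset _ _ _).mpr h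
    rw [hnxb] at hmem
    have h1 := (hmemS2 _).1 hmem
    have h2 := hdistadj u (m v) (hA4 v hv)
    omega
  -- injectivity
  have hdist0 : Γ.dist u u = 0 := SimpleGraph.dist_self
  have hdistq : ∀ j, Γ.dist u (q j) = 2 := fun j => (hmemS2 _).1 (hq j)
  have hdistm : ∀ j, Γ.dist u (m (q j)) = 1 := fun j => hdistadj u _ (hA4 _ (hq j))
  have hFinj : Function.Injective F := by
    rintro ⟨i, bi⟩ ⟨j, bj⟩ hF
    rcases Fin.eq_zero_or_eq_succ i with rfl | ⟨i', rfl⟩ <;>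
      rcases Fin.eq_zero_or_eq_succ j with rfl | ⟨j', rfl⟩ <;>
      cases bi <;> cases bj <;>
      simp only [hFdef, mkFun_zero_false, mkFun_zero_true, mkFun_succ_false,
        mkFun_succ_true] at hF
    · rfl
    · have := congrArg (Γ.dist u) hF; rw [hdist0, hxb3] at this; omega
    · have := congrArg (Γ.dist u) hF; rw [hxb3, hdist0] at this; omega
    · rfl
    · have := congrArg (Γ.dist u) hF; rw [hdist0, hdistq] at this; omega
    · have := congrArg (Γ.dist u) hF; rw [hdist0, hdistm] at this; omega
    · have := congrArg (Γ.dist u) hF; rw [hxb3, hdistq] at this; omega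
    · have := congrArg (Γ.dist u) hF; rw [hxb3, hdistm] at this; omega
    · have := congrArg (Γ.dist u) hF; rw [hdistq, hdist0] at this; omega
    · have := congrArg (Γ.dist u) hF; rw [hdistq, hxb3] at this; omega
    · have := congrArg (Γ.dist u) hF; rw [hdistm, hdist0] at this; omega
    · have := congrArg (Γ.dist u) hF; rw [hdistm, hxb3] at this; omega
    · rw [hqinj i' j' hF]
    · have := congrArg (Γ.dist u) hF; rw [hdistq, hdistm] at this; omega
    · have := congrArg (Γ.dist u) hF; rw [hdistm, hdistq] at this; omega
    · have h1 := hminj (q i') (hq i') (q j') (hq j') hF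
      rw [hqinj i' j' h1]
  have hFsurj : Function.Surjective F := by
    intro y
    rcases hclass y with rfl | hy | hy | rfl
    · exact ⟨(0, false), by simp [hFdef]⟩
    · obtain ⟨v, hv, hmv⟩ := hmsurj y hy
      refine ⟨((Eq2 ⟨v, hv⟩).succ, true), ?_⟩
      simp only [hFdef, mkFun_succ_true, hqval v hv, hmv]
    · refine ⟨((Eq2 ⟨y, hy⟩).succ, false), ?_⟩
      simp only [hFdef, mkFun_succ_false, hqval y hy]
    · exact ⟨(0, true), by simp [hFdef]⟩
  -- adjacency characterization
  have hFadj : ∀ a b : Fin (k + 1) × Bool, Γ.Adj (F a) (F b) ↔ (a.1 ≠ b.1 ∧ a.2 ≠ b.2) := by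
    rintro ⟨i, bi⟩ ⟨j, bj⟩
    rcases Fin.eq_zero_or_eq_succ i with rfl | ⟨i', rfl⟩ <;>
      rcases Fin.eq_zero_or_eq_succ j with rfl | ⟨j', rfl⟩ <;>
      cases bi <;> cases bj <;>
      simp only [hFdef, mkFun_zero_false, mkFun_zero_true, mkFun_succ_false, mkFun_succ_true]
    · simp [Γ.loopless.irrefl u]
    · simp [hA2]
    · have h : ¬ Γ.Adj xb u := fun h => hA2 h.symm
      simp [h]
    · simp [Γ.loopless.irrefl xb]
    · simp [hA3 (q j') (hq j')]
    · simp [hA4 (q j') (hq j'), (Fin.succ_ne_zero j').symm]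
    · simp [(hadjxb (q j') (hq j')).symm, (Fin.succ_ne_zero j').symm]
    · simp [hA9 (q j') (hq j')]
    · have h : ¬ Γ.Adj (q i') u := fun h => hA3 (q i') (hq i') h.symm
      simp [h]
    · simp [hadjxb (q i') (hq i'), Fin.succ_ne_zero i']
    · simp [(hA4 (q i') (hq i')).symm, Fin.succ_ne_zero i']
    · have h : ¬ Γ.Adj (m (q i')) xb := fun h => hA9 (q i') (hq i') h.symm
      simp [h]
    · simp [hS2nonadj (q i') (hq i') (q j') (hq j')]
    · rw [hA7' (q i') (hq i') (q j') (hq j')]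
      constructor
      · intro h
        refine ⟨?_, by simp⟩
        intro hsucc
        exact h (congrArg q (Fin.succ_injective _ hsucc))
      · rintro ⟨h, -⟩ hqe
        exact h (congrArg Fin.succ (hqinj i' j' hqe))
    · rw [Γ.adj_comm, hA7' (q j') (hq j') (q i') (hq i')]
      constructor
      · intro h
        refine ⟨?_, by simp⟩
        intro hsucc
        exact h (congrArg q (Fin.succ_injective _ hsucc)).symm
      · rintro ⟨h, -⟩ hqe
        exact h (congrArg Fin.succ (hqinj j' i' hqe).symm)
    · simp [hA8 (q i') (hq i') (q j') (hq j')]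
  refine ⟨(SimpleGraph.Iso.symm ⟨Equiv.ofBijective F ⟨hFinj, hFsurj⟩, ?_⟩)⟩
  intro a b
  exact hFadj a b
end
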